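/- arXiv:1401.6852 — 9 statements merged into one kernel-verified Lean document; each statement's English description precedes it below -/
import Mathlib

section
/- Let A be a unital C*-algebra, let G be a finite group, and let α : G → Aut(A) be an action of G on A. Then α has the Rokhlin property if and only if for every ε > 0 and every finite subset F ⊆ A there exist projections (p_g)_{g∈G} in A (i.e., p_g = p_g² = p_g*) with ∑_{g∈G} p_g = 1, such that ‖α_g(p_h) − p_{gh}‖ < ε for all g, h ∈ G and ‖p_g a − a p_g‖ < ε for all a ∈ F and g ∈ G. -/
/-- The Rokhlin property for an action of a finite group `G` on a C*-algebra `A`. -/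
def RokhlinProperty {G A : Type*} [Group G] [Fintype G] [NonUnitalCStarAlgebra A]
    (α : G → (A ≃⋆ₐ[ℂ] A)) : Prop :=
  ∀ (ε : ℝ), 0 < ε → ∀ (F : Finset A),
    ∃ r : G → A,
      (∀ g, ∃ s, r g = star s * s) ∧
      (∀ g, ‖r g‖ ≤ 1) ∧
      (∀ g h, g ≠ h → r g * r h = 0) ∧
      (∀ g h, ‖α g (r h) - r (g * h)‖ < ε) ∧
      (∀ a ∈ F, ∀ g, ‖r g * a - a * r g‖ < ε) ∧
      (∀ a ∈ F, ‖(∑ g, r g) * a - a‖ < ε)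

namespace RokhlinAux

noncomputable def kfun : ℝ → ℝ := fun t => min ((max t (1/2 : ℝ))⁻¹) (max 0 (8*t - 2))
noncomputable def ffun : ℝ → ℝ := fun t => t * kfun t

lemma kfun_continuous : Continuous kfun := by
  unfold kfun
  exact Continuous.min ((continuous_id.max continuous_const).inv₀ (fun x => by positivity))
    (continuous_const.max (by continuity))

lemma ffun_continuous : Continuous ffun := continuous_id.mul kfun_continuous

lemma ffun_of_le {t : ℝ} (ht : t ≤ 1/4) : ffun t = 0 := by
  have h1 : max 0 (8*t - 2) = 0 := max_eq_left (by linarith)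
  have h2 : (0:ℝ) ≤ (max t (1/2 : ℝ))⁻¹ := by positivity
  simp [ffun, kfun, h1, min_eq_right h2]

lemma ffun_of_ge {t : ℝ} (ht : 1/2 ≤ t) : ffun t = 1 := by
  have ht0 : (0:ℝ) < t := by linarith
  have h1 : max t (1/2:ℝ) = t := max_eq_left ht
  have h2 : t⁻¹ ≤ max 0 (8*t - 2) := by
    refine le_max_of_le_right ?_
    have : t⁻¹ ≤ 2 := by rw [inv_le_comm₀ ht0 (by norm_num)]; linarith
    linarith
  simp only [ffun, kfun, h1, min_eq_left h2]
  field_simp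

lemma key_real {t c : ℝ} (hc : c ≤ 1/16) (h1 : |t| ≤ 1) (h2 : |t * t - t| ≤ c) :
    |t| ≤ 2 * c ∨ |t - 1| ≤ 2 * c := by
  rw [abs_le] at h1 h2
  rcases le_or_gt t (1/2) with h | h
  · left
    rw [abs_le]
    refine ⟨?_, ?_⟩
    · nlinarith
    · rcases le_or_gt t 0 with h0 | h0
      · nlinarith
      · nlinarith
  · right
    rw [abs_le]
    constructor <;> nlinarith

variable {A : Type*} [CStarAlgebra A] [Nontrivial A]

lemma spec_dichotomy {a : A} (ha : IsSelfAdjoint a) (hn : ‖a‖ ≤ 1) {c : ℝ}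
    (hc : c ≤ 1/16) (hsq : ‖a * a - a‖ ≤ c) {t : ℝ} (ht : t ∈ spectrum ℝ a) :
    (ffun t = 0 ∧ |ffun t - t| ≤ 2*c) ∨ (ffun t = 1 ∧ |ffun t - t| ≤ 2*c) := by
  have hcalc : cfc (fun t : ℝ => t * t - t) a = a * a - a := by
    rw [cfc_sub (fun t : ℝ => t * t) (fun t : ℝ => t) a,
      cfc_mul (fun t : ℝ => t) (fun t : ℝ => t) a, cfc_id' ℝ a]
  have hmem : t * t - t ∈ spectrum ℝ (a * a - a) := by
    rw [← hcalc, cfc_map_spectrum (fun t : ℝ => t * t - t) a]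
    exact ⟨t, ht, rfl⟩
  have h2 : |t * t - t| ≤ c := by
    simpa using (spectrum.norm_le_norm_of_mem hmem).trans hsq
  have h1 : |t| ≤ 1 := by
    simpa using (spectrum.norm_le_norm_of_mem ht).trans hn
  rcases key_real hc h1 h2 with h | h
  · left
    have h4 : t ≤ 1/4 := by
      have := (abs_le.mp h).2; linarith
    rw [ffun_of_le h4]
    exact ⟨rfl, by simpa using h⟩
  · right
    have h4 : 1/2 ≤ t := by
      have := (abs_le.mp h).1; linarith
    rw [ffun_of_ge h4]
    refine ⟨rfl, ?_⟩
    rw [abs_sub_comm]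
    simpa using h

lemma exists_proj {a : A} (ha : IsSelfAdjoint a) (hn : ‖a‖ ≤ 1) {c : ℝ}
    (hc : c ≤ 1/16) (hsq : ‖a * a - a‖ ≤ c) :
    ∃ p b : A, IsSelfAdjoint p ∧ IsIdempotentElem p ∧ ‖p - a‖ ≤ 2*c ∧ p = a * b ∧ p = b * a := by
  have hc0 : 0 ≤ c := le_trans (norm_nonneg _) hsq
  have hfc : ContinuousOn ffun (spectrum ℝ a) := ffun_continuous.continuousOn
  have hkc : ContinuousOn kfun (spectrum ℝ a) := kfun_continuous.continuousOn
  refine ⟨cfc ffun a, cfc kfun a, cfc_predicate ffun a, ?_, ?_, ?_, ?_⟩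
  · unfold IsIdempotentElem
    rw [← cfc_mul ffun ffun a]
    apply cfc_congr
    intro t ht
    rcases spec_dichotomy ha hn hc hsq ht with ⟨h0, _⟩ | ⟨h0, _⟩ <;>
      simp [h0]
  · have heq : cfc (fun t => ffun t - t) a = cfc ffun a - a := by
      rw [cfc_sub ffun (fun t : ℝ => t) a, cfc_id' ℝ a]
    rw [← heq]
    apply norm_cfc_le (by positivity)
    intro t ht
    rcases spec_dichotomy ha hn hc hsq ht with ⟨_, h⟩ | ⟨_, h⟩ <;> simpa using h
  · have : a * cfc kfun a = cfc (fun t : ℝ => t * kfun t) a := by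
      rw [cfc_mul (fun t : ℝ => t) kfun a, cfc_id' ℝ a]
    rw [this]
    rfl
  · have : cfc kfun a * a = cfc (fun t : ℝ => kfun t * t) a := by
      rw [cfc_mul kfun (fun t : ℝ => t) a, cfc_id' ℝ a]
    rw [this]
    apply cfc_congr
    intro t _
    exact mul_comm t (kfun t)

lemma proj_orth {G : Type*} [Fintype G] [DecidableEq G] (p : G → A)
    (hp : ∀ g, IsSelfAdjoint (p g) ∧ IsIdempotentElem (p g))
    (hsum : (∑ g, p g) = 1) {g h : G} (hgh : g ≠ h) : p g * p h = 0 := by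
  let _ := CStarAlgebra.spectralOrder A
  have _ : StarOrderedRing A := CStarAlgebra.spectralOrderedRing A
  have hnn : ∀ k, 0 ≤ p k := fun k => by
    have : p k = star (p k) * p k := by rw [(hp k).1.star_eq, (hp k).2]
    rw [this]; exact star_mul_self_nonneg _
  have hle : p h ≤ 1 - p g := by
    have key : 1 - p g - p h = ∑ k ∈ (Finset.univ \ {g, h}), p k := by
      rw [← hsum]
      rw [Finset.sum_sdiff_eq_sub (Finset.subset_univ _)]
      rw [Finset.sum_pair hgh]
      abel
    have : 0 ≤ 1 - p g - p h := by
      rw [key]; exact Finset.sum_nonneg fun k _ => hnn k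
    exact sub_nonneg.mp this
  have h1 : p g * p h * p g ≤ 0 := by
    calc p g * p h * p g ≤ p g * (1 - p g) * p g := by
          have h2 := star_left_conjugate_le_conjugate hle (p g)
          rwa [(hp g).1.star_eq] at h2
      _ = 0 := by
          have e := (hp g).2
          unfold IsIdempotentElem at e
          rw [show p g * (1 - p g) * p g = p g * p g - p g * p g * p g from by noncomm_ring,
            e, e, sub_self]
  have h2 : (0:A) ≤ p g * p h * p g := by
    have : p g * p h * p g = star (p h * p g) * (p h * p g) := by
      rw [star_mul, (hp g).1.star_eq, (hp h).1.star_eq]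
      calc p g * p h * p g = p g * (p h * p h) * p g := by rw [(hp h).2]
        _ = p g * p h * (p h * p g) := by noncomm_ring
    rw [this]
    exact star_mul_self_nonneg _
  have h3 : p g * p h * p g = 0 := le_antisymm h1 h2
  have h4 : p h * p g = 0 := by
    have : star (p h * p g) * (p h * p g) = 0 := by
      rw [star_mul, (hp g).1.star_eq, (hp h).1.star_eq]
      calc p g * p h * (p h * p g) = p g * (p h * p h) * p g := by noncomm_ring
        _ = p g * p h * p g := by rw [(hp h).2]
        _ = 0 := h3
    exact CStarRing.star_mul_self_eq_zero_iff _ |>.mp this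
  calc p g * p h = star (p h * p g) := by rw [star_mul, (hp g).1.star_eq, (hp h).1.star_eq]
    _ = 0 := by rw [h4, star_zero]

end RokhlinAux

/-- For a unital C*-algebra, the Rokhlin property is equivalent to the classical
formulation in terms of partitions of unity consisting of projections. -/
theorem stmt2 {G A : Type*} [Group G] [Fintype G] [CStarAlgebra A]
    (α : G → (A ≃⋆ₐ[ℂ] A)) (hα : ∀ g h a, α (g * h) a = α g (α h a)) :
    RokhlinProperty α ↔
      ∀ (ε : ℝ), 0 < ε → ∀ (F : Finset A),
        ∃ p : G → A,
          (∀ g, IsSelfAdjoint (p g) ∧ IsIdempotentElem (p g)) ∧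
          (∑ g, p g) = 1 ∧
          (∀ g h, ‖α g (p h) - p (g * h)‖ < ε) ∧
          (∀ a ∈ F, ∀ g, ‖p g * a - a * p g‖ < ε) := by
  classical
  obtain hA | hA := subsingleton_or_nontrivial A
  · have h0 : ∀ x : A, x = 0 := fun x => Subsingleton.elim x 0
    constructor
    · intro _ ε hε F
      refine ⟨fun _ => 1, fun g => ⟨IsSelfAdjoint.one A, ?_⟩, Subsingleton.elim _ _,
        fun g h => ?_, fun a _ g => ?_⟩
      · exact Subsingleton.elim _ _
      · rw [h0 (α g 1 - 1), norm_zero]; exact hε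
      · rw [h0 (1 * a - a * 1), norm_zero]; exact hε
    · intro _ ε hε F
      refine ⟨fun _ => 1, fun g => ⟨1, Subsingleton.elim _ _⟩, fun g => ?_,
        fun g h _ => Subsingleton.elim _ _, fun g h => ?_, fun a _ g => ?_, fun a _ => ?_⟩
      · rw [h0 (1:A), norm_zero]; exact zero_le_one
      · rw [h0 ((α g) 1 - 1), norm_zero]; exact hε
      · rw [h0 (1 * a - a * 1), norm_zero]; exact hε
      · rw [h0 ((∑ _g : G, (1:A)) * a - a), norm_zero]; exact hε
  constructor
  · -- Rokhlin ⇒ projections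
    intro hR ε hε F
    set n : ℕ := Fintype.card G with hn
    set M : ℝ := 1 + ∑ a ∈ F, ‖a‖ with hM
    have hM1 : (1:ℝ) ≤ M := by
      have : (0:ℝ) ≤ ∑ a ∈ F, ‖a‖ := Finset.sum_nonneg fun a _ => norm_nonneg a
      simp only [hM]; linarith
    have hMa : ∀ a ∈ F, ‖a‖ ≤ M := by
      intro a haF
      have : ‖a‖ ≤ ∑ b ∈ F, ‖b‖ := Finset.single_le_sum (fun b _ => norm_nonneg b) haF
      simp only [hM]; linarith
    set ε' : ℝ := min (1/(16 * (n+1))) (ε/(5*(1+4*M))) with hε'def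
    have hε'pos : 0 < ε' := by
      apply lt_min
      · positivity
      · have : (0:ℝ) < 5*(1+4*M) := by nlinarith
        positivity
    have hε'16 : ε' ≤ 1/16 := by
      refine (min_le_left _ _).trans ?_
      rw [div_le_div_iff₀ (by positivity) (by norm_num)]
      nlinarith [Nat.cast_nonneg (α := ℝ) n]
    have hε'n : (2*(n:ℝ)+1) * ε' < 1 := by
      have h1 : ε' ≤ 1/(16*(n+1)) := min_le_left _ _
      have h2 : (0:ℝ) < 16*((n:ℝ)+1) := by positivity
      have h3 : (2*(n:ℝ)+1) * ε' ≤ (2*(n:ℝ)+1) / (16*(n+1)) := by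
        rw [div_eq_mul_inv]
        have := Nat.cast_nonneg (α := ℝ) n
        calc (2*(n:ℝ)+1) * ε' ≤ (2*(n:ℝ)+1) * (1/(16*(n+1))) := by nlinarith
          _ = (2*(n:ℝ)+1) * (16*((n:ℝ)+1))⁻¹ := by rw [one_div]
      refine h3.trans_lt ?_
      rw [div_lt_one h2]
      have := Nat.cast_nonneg (α := ℝ) n
      nlinarith
    have hε'ε : ε' * (5*(1+4*M)) ≤ ε := by
      have h1 : ε' ≤ ε/(5*(1+4*M)) := min_le_right _ _
      have h2 : (0:ℝ) < 5*(1+4*M) := by nlinarith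
      calc ε' * (5*(1+4*M)) ≤ (ε/(5*(1+4*M))) * (5*(1+4*M)) := by nlinarith
        _ = ε := by field_simp
    obtain ⟨r, hpos, hnorm, horth, hact, hcomm, happrox⟩ := hR ε' hε'pos (insert 1 F)
    have hS : ‖(∑ g, r g) - 1‖ < ε' := by
      have := happrox 1 (Finset.mem_insert_self 1 F)
      simpa using this
    have hsa : ∀ g, IsSelfAdjoint (r g) := by
      intro g
      obtain ⟨s, hs⟩ := hpos g
      rw [hs]
      exact IsSelfAdjoint.star_mul_self s
    have hsq : ∀ g, ‖r g * r g - r g‖ ≤ ε' := by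
      intro g
      have key : r g * r g - r g = r g * ((∑ h, r h) - 1) := by
        rw [mul_sub, mul_one, Finset.mul_sum]
        congr 1
        rw [Finset.sum_eq_single g (fun h _ hne => horth g h (Ne.symm hne)) (by simp)]
      rw [key]
      calc ‖r g * ((∑ h, r h) - 1)‖ ≤ ‖r g‖ * ‖(∑ h, r h) - 1‖ := norm_mul_le _ _
        _ ≤ 1 * ε' := by
            apply mul_le_mul (hnorm g) hS.le (norm_nonneg _) zero_le_one
        _ = ε' := one_mul _
    have H : ∀ g, ∃ p b : A, IsSelfAdjoint p ∧ IsIdempotentElem p ∧ ‖p - r g‖ ≤ 2*ε' ∧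
        p = r g * b ∧ p = b * r g :=
      fun g => RokhlinAux.exists_proj (hsa g) (hnorm g) hε'16 (hsq g)
    choose p b hp1 hp2 hp3 hp4 hp5 using H
    have hporth : ∀ g h : G, g ≠ h → p g * p h = 0 := by
      intro g h hgh
      rw [hp5 g, hp4 h]
      rw [show b g * r g * (r h * b h) = b g * (r g * r h) * b h from by noncomm_ring,
        horth g h hgh]
      simp
    have hqsa : IsSelfAdjoint (∑ g, p g) := by
      rw [IsSelfAdjoint, star_sum]
      exact Finset.sum_congr rfl fun g _ => (hp1 g).star_eq
    have hqidem : IsIdempotentElem (∑ g, p g) := by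
      unfold IsIdempotentElem
      rw [Finset.sum_mul]
      refine Finset.sum_congr rfl fun g _ => ?_
      rw [Finset.mul_sum, Finset.sum_eq_single g (fun h _ hne => hporth g h (Ne.symm hne))
        (by simp)]
      exact hp2 g
    have hq1 : ‖1 - ∑ g, p g‖ < 1 := by
      have h1 : ‖(∑ g, r g) - ∑ g, p g‖ ≤ 2*(n:ℝ)*ε' := by
        rw [← Finset.sum_sub_distrib]
        calc ‖∑ g, (r g - p g)‖ ≤ ∑ g : G, ‖r g - p g‖ := norm_sum_le _ _
          _ ≤ ∑ _g : G, 2*ε' := by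
              refine Finset.sum_le_sum fun g _ => ?_
              rw [norm_sub_rev]
              exact hp3 g
          _ = 2*(n:ℝ)*ε' := by
              rw [Finset.sum_const, Finset.card_univ, nsmul_eq_mul, ← hn]
              ring
      calc ‖1 - ∑ g, p g‖ = ‖(1 - ∑ g, r g) + ((∑ g, r g) - ∑ g, p g)‖ := by
            rw [sub_add_sub_cancel]
        _ ≤ ‖1 - ∑ g, r g‖ + ‖(∑ g, r g) - ∑ g, p g‖ := norm_add_le _ _
        _ < ε' + 2*(n:ℝ)*ε' := by
            rw [norm_sub_rev]
            exact add_lt_add_of_lt_of_le hS h1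
        _ = (2*(n:ℝ)+1) * ε' := by ring
        _ < 1 := hε'n
    have hqeq : (∑ g, p g) = 1 := by
      set e : A := 1 - ∑ g, p g with he
      have hesa : IsSelfAdjoint e := by
        rw [he]
        exact (IsSelfAdjoint.one A).sub hqsa
      have heidem : IsIdempotentElem e := by
        unfold IsIdempotentElem
        rw [he]
        have := hqidem
        unfold IsIdempotentElem at this
        rw [mul_sub, sub_mul, sub_mul, this]
        noncomm_ring
      have hnorm_e : ‖e‖ * ‖e‖ = ‖e‖ := by
        calc ‖e‖ * ‖e‖ = ‖star e * e‖ := (CStarRing.norm_star_mul_self).symm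
          _ = ‖e * e‖ := by rw [hesa.star_eq]
          _ = ‖e‖ := by rw [heidem]
      have : ‖e‖ = 0 := by
        have h0 := norm_nonneg e
        have h1 : ‖e‖ < 1 := hq1
        nlinarith
      have : e = 0 := norm_eq_zero.mp this
      rw [he] at this
      exact (sub_eq_zero.mp this).symm
    refine ⟨p, fun g => ⟨hp1 g, hp2 g⟩, hqeq, ?_, ?_⟩
    · intro g h
      have key : α g (p h) - p (g*h) =
          α g (p h - r h) + (α g (r h) - r (g*h)) + (r (g*h) - p (g*h)) := by
        rw [map_sub]
        abel
      rw [key]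
      have h1 : ‖α g (p h - r h)‖ ≤ 2*ε' := by
        rw [StarAlgEquiv.norm_map]
        exact hp3 h
      have h2 : ‖α g (r h) - r (g*h)‖ < ε' := hact g h
      have h3 : ‖r (g*h) - p (g*h)‖ ≤ 2*ε' := by
        rw [norm_sub_rev]
        exact hp3 (g*h)
      calc ‖α g (p h - r h) + (α g (r h) - r (g*h)) + (r (g*h) - p (g*h))‖
          ≤ ‖α g (p h - r h) + (α g (r h) - r (g*h))‖ + ‖r (g*h) - p (g*h)‖ := norm_add_le _ _
        _ ≤ ‖α g (p h - r h)‖ + ‖α g (r h) - r (g*h)‖ + ‖r (g*h) - p (g*h)‖ := by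
            have := norm_add_le (α g (p h - r h)) (α g (r h) - r (g*h))
            linarith
        _ < 2*ε' + ε' + 2*ε' := by linarith
        _ = 5*ε' := by ring
        _ ≤ ε := by nlinarith
    · intro a haF g
      have haM : ‖a‖ ≤ M := hMa a haF
      have key : p g * a - a * p g =
          (p g - r g) * a + (r g * a - a * r g) + a * (r g - p g) := by noncomm_ring
      rw [key]
      have h1 : ‖(p g - r g) * a‖ ≤ 2*ε'*M := by
        calc ‖(p g - r g) * a‖ ≤ ‖p g - r g‖ * ‖a‖ := norm_mul_le _ _
          _ ≤ (2*ε') * M := by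
              apply mul_le_mul (hp3 g) haM (norm_nonneg _) (by positivity)
      have h2 : ‖r g * a - a * r g‖ < ε' := hcomm a (Finset.mem_insert_of_mem haF) g
      have h3 : ‖a * (r g - p g)‖ ≤ 2*ε'*M := by
        calc ‖a * (r g - p g)‖ ≤ ‖a‖ * ‖r g - p g‖ := norm_mul_le _ _
          _ ≤ M * (2*ε') := by
              rw [norm_sub_rev]
              apply mul_le_mul haM (hp3 g) (norm_nonneg _) (by linarith)
          _ = 2*ε'*M := by ring
      calc ‖(p g - r g) * a + (r g * a - a * r g) + a * (r g - p g)‖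
          ≤ ‖(p g - r g) * a + (r g * a - a * r g)‖ + ‖a * (r g - p g)‖ := norm_add_le _ _
        _ ≤ ‖(p g - r g) * a‖ + ‖r g * a - a * r g‖ + ‖a * (r g - p g)‖ := by
            have := norm_add_le ((p g - r g) * a) (r g * a - a * r g)
            linarith
        _ < 2*ε'*M + ε' + 2*ε'*M := by linarith
        _ = ε' * (1 + 4*M) := by ring
        _ ≤ ε := by nlinarith
  · -- projections ⇒ Rokhlin
    intro hP ε hε F
    obtain ⟨p, hp, hsum, hact, hcomm⟩ := hP ε hε F
    refine ⟨p, ?_, ?_, ?_, hact, hcomm, ?_⟩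
    · intro g
      exact ⟨p g, by rw [(hp g).1.star_eq, (hp g).2]⟩
    · intro g
      have h1 : ‖p g‖ * ‖p g‖ = ‖p g‖ := by
        calc ‖p g‖ * ‖p g‖ = ‖star (p g) * p g‖ := (CStarRing.norm_star_mul_self).symm
          _ = ‖p g * p g‖ := by rw [(hp g).1.star_eq]
          _ = ‖p g‖ := by rw [(hp g).2]
      nlinarith [norm_nonneg (p g)]
    · intro g h hgh
      exact RokhlinAux.proj_orth p hp hsum hgh
    · intro a _
      rw [hsum]
      simpa using hε
end

section
/- Let A be a C*-algebra, let G be a finite group, and let α : G → Aut(A) be an action of G on A. Let 𝓜(A) denote the multiplier algebra of A with canonical *-embedding ι : A → 𝓜(A), and suppose for each g ∈ G we are given a *-automorphism ᾱ_g of 𝓜(A) with ᾱ_g(ι(a)) = ι(α_g(a)) for all a ∈ A. Assume α has the multiplier Rokhlin property: for every finite subset F ⊆ A and every ε > 0 there exist mutually orthogonal projections (p_g)_{g∈G} in 𝓜(A) with ∑_{g∈G} p_g = 1, ‖ᾱ_g(p_h) − p_{gh}‖ < ε for all g, h ∈ G, and ‖p_g ι(a) − ι(a) p_g‖ < ε for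 all g ∈ G and a ∈ F. Then α has the Rokhlin property. -/
open scoped MultiplierAlgebra

open scoped CStarAlgebra

namespace RokhlinProof

variable {A : Type*} [NonUnitalCStarAlgebra A]

lemma left_cancel {c d : A} (h : ∀ w : A, w * c = w * d) : c = d := by
  have h2 : star (c - d) * (c - d) = 0 := by
    rw [mul_sub, h (star (c - d)), sub_self]
  rwa [CStarRing.star_mul_self_eq_zero_iff, sub_eq_zero] at h2

lemma right_cancel {c d : A} (h : ∀ w : A, c * w = d * w) : c = d := by
  have h2 : (c - d) * star (c - d) = 0 := by
    rw [sub_mul, h (star (c - d)), sub_self]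
  rwa [CStarRing.mul_star_self_eq_zero_iff, sub_eq_zero] at h2

lemma mul_coe (p : 𝓜(ℂ, A)) (a : A) :
    p * DoubleCentralizer.coe ℂ a = DoubleCentralizer.coe ℂ (p.fst a) := by
  refine DoubleCentralizer.ext _ _ _ _ (Prod.ext ?_ ?_)
  · refine ContinuousLinearMap.ext fun x => ?_
    show p.fst (a * x) = p.fst a * x
    refine left_cancel fun w => ?_
    calc w * p.fst (a * x) = p.snd w * (a * x) := (p.central w (a * x)).symm
      _ = (p.snd w * a) * x := by rw [mul_assoc]
      _ = (w * p.fst a) * x := by rw [p.central w a]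
      _ = w * (p.fst a * x) := by rw [mul_assoc]
  · refine ContinuousLinearMap.ext fun x => ?_
    exact p.central x a

lemma coe_mul (p : 𝓜(ℂ, A)) (a : A) :
    DoubleCentralizer.coe ℂ a * p = DoubleCentralizer.coe ℂ (p.snd a) := by
  refine DoubleCentralizer.ext _ _ _ _ (Prod.ext ?_ ?_)
  · refine ContinuousLinearMap.ext fun x => ?_
    exact (p.central a x).symm
  · refine ContinuousLinearMap.ext fun x => ?_
    show p.snd (x * a) = x * p.snd a
    refine right_cancel fun w => ?_
    calc p.snd (x * a) * w = (x * a) * p.fst w := p.central (x * a) w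
      _ = x * (a * p.fst w) := by rw [mul_assoc]
      _ = x * (p.snd a * w) := by rw [p.central a w]
      _ = (x * p.snd a) * w := by rw [mul_assoc]

lemma coe_inj : Function.Injective (DoubleCentralizer.coe ℂ : A → 𝓜(ℂ, A)) := by
  intro a b hab
  exact right_cancel fun x => congrArg (fun (q : 𝓜(ℂ, A)) => q.fst x) hab

lemma norm_coe (a : A) : ‖DoubleCentralizer.coe ℂ a‖ = ‖a‖ :=
  NonUnitalStarAlgHom.norm_map (DoubleCentralizer.coeHom (𝕜 := ℂ) (A := A)) coe_inj a

lemma norm_mul_mul_le {M : Type*} [NonUnitalSeminormedRing M] (x y z : M) :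
    ‖x * y * z‖ ≤ ‖x‖ * ‖y‖ * ‖z‖ :=
  le_trans (norm_mul_le _ _) (mul_le_mul_of_nonneg_right (norm_mul_le x y) (norm_nonneg z))

lemma mul_le_c_one {x y c : ℝ} (hx0 : 0 ≤ x) (hx : x ≤ c) (hy0 : 0 ≤ y) (hy : y ≤ 1) :
    x * y ≤ c := by
  have h2 : x * y ≤ x * 1 := mul_le_mul_of_nonneg_left hy hx0
  nlinarith

lemma mul_le_one_c {x y c : ℝ} (hx0 : 0 ≤ x) (hx : x ≤ 1) (hy0 : 0 ≤ y) (hy : y ≤ c)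
    (hc : 0 ≤ c) : x * y ≤ c := by
  have h2 : x * y ≤ 1 * y := mul_le_mul_of_nonneg_right hx hy0
  nlinarith

lemma mul3_le_one {x y z : ℝ} (hx0 : 0 ≤ x) (hx : x ≤ 1) (hy0 : 0 ≤ y) (hy : y ≤ 1)
    (hz0 : 0 ≤ z) (hz : z ≤ 1) : x * y * z ≤ 1 := by
  have h1 : x * y ≤ 1 := mul_le_one_c hx0 hx hy0 hy zero_le_one
  have h2 : x * y * z ≤ 1 * z := mul_le_mul_of_nonneg_right h1 hz0
  nlinarith

lemma mul3_le_c {x y z c : ℝ} (hx0 : 0 ≤ x) (hx : x ≤ 1) (hy0 : 0 ≤ y) (hy : y ≤ 1)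
    (hz0 : 0 ≤ z) (hz : z ≤ c) : x * y * z ≤ c := by
  have h1 : x * y ≤ 1 := mul_le_one_c hx0 hx hy0 hy zero_le_one
  have h2 : x * y * z ≤ 1 * z := mul_le_mul_of_nonneg_right h1 hz0
  nlinarith

lemma mul3_le_c' {x y z c : ℝ} (hx0 : 0 ≤ x) (hx : x ≤ c) (hy0 : 0 ≤ y) (hy : y ≤ 1)
    (hz0 : 0 ≤ z) (hz : z ≤ 1) (hc : 0 ≤ c) : x * y * z ≤ c := by
  have h1 : y * z ≤ 1 := mul_le_one_c hy0 hy hz0 hz zero_le_one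
  have h2 : x * (y * z) ≤ x * 1 := mul_le_mul_of_nonneg_left h1 hx0
  rw [mul_assoc]
  nlinarith

set_option maxHeartbeats 2000000 in
lemma exists_approx_unit (F' : Finset A) {δ : ℝ} (hδ : 0 < δ) :
    ∃ e : A, IsSelfAdjoint e ∧ ‖e‖ ≤ 1 ∧
      ∀ b ∈ F', ‖b - e * b‖ ≤ δ ∧ ‖b - b * e‖ ≤ δ := by
  classical
  set c : ℝ := δ ^ 2 with hc
  have hc0 : 0 < c := by positivity
  set f : ℝ → ℝ := fun t => t ^ 2 / (t ^ 2 + c ^ 2) with hf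
  have hfc : Continuous f := by
    apply Continuous.div (by fun_prop) (by fun_prop)
    intro t; positivity
  have hf0 : f 0 = 0 := by simp [hf]
  have hf01 : ∀ t : ℝ, 0 ≤ f t ∧ f t ≤ 1 := by
    intro t
    refine ⟨by positivity, ?_⟩
    rw [hf]
    rw [div_le_one (by positivity)]; nlinarith
  set h : A := ∑ b ∈ F', (star b * b + b * star b) with hh
  set e : A := cfcₙ f h with he
  have hesa : IsSelfAdjoint e := cfcₙ_predicate f h
  have hE : (e : A⁺¹) = cfc f (h : A⁺¹) := Unitization.real_cfcₙ_eq_cfc_inr h f hf0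
  have hHcoe : (h : A⁺¹) = ∑ b ∈ F', (star (b : A⁺¹) * (b : A⁺¹) + (b : A⁺¹) * star (b : A⁺¹)) := by
    rw [hh]
    rw [show ((∑ b ∈ F', (star b * b + b * star b) : A) : A⁺¹) =
      Unitization.inrNonUnitalStarAlgHom ℂ A (∑ b ∈ F', (star b * b + b * star b)) from rfl]
    rw [map_sum]
    refine Finset.sum_congr rfl fun b _ => ?_
    simp [map_add, map_mul, map_star]
  have hH0 : 0 ≤ (h : A⁺¹) := by
    rw [hHcoe]
    exact Finset.sum_nonneg fun b _ =>
      add_nonneg (star_mul_self_nonneg _) (mul_star_self_nonneg _)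
  have hHsa : IsSelfAdjoint ((h : A⁺¹)) := hH0.isSelfAdjoint
  have hspec : ∀ t ∈ spectrum ℝ (h : A⁺¹), 0 ≤ t := fun t ht =>
    spectrum_nonneg_of_nonneg hH0 ht
  have hecontr : ‖e‖ ≤ 1 := by
    rw [he]
    exact norm_cfcₙ_le fun t _ => by
      rw [Real.norm_eq_abs, abs_of_nonneg (hf01 t).1]; exact (hf01 t).2
  clear_value c f h e
  refine ⟨e, hesa, hecontr, fun b hb => ?_⟩
  have hterm : ∀ x ∈ F', (0 : A⁺¹) ≤ star (x : A⁺¹) * (x : A⁺¹) + (x : A⁺¹) * star (x : A⁺¹) := fun x _ =>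
    add_nonneg (star_mul_self_nonneg _) (mul_star_self_nonneg _)
  have hble1 : (b : A⁺¹) * star (b : A⁺¹) ≤ (h : A⁺¹) := by
    rw [hHcoe]
    exact le_trans (le_add_of_nonneg_left (star_mul_self_nonneg _))
      (Finset.single_le_sum hterm hb)
  have hble2 : star (b : A⁺¹) * (b : A⁺¹) ≤ (h : A⁺¹) := by
    rw [hHcoe]
    exact le_trans (le_add_of_nonneg_right (mul_star_self_nonneg _))
      (Finset.single_le_sum hterm hb)
  have hEsa : IsSelfAdjoint ((e : A⁺¹)) := hesa.inr ℂ
  have h1E : star ((1 : A⁺¹) - (e : A⁺¹)) = (1 : A⁺¹) - (e : A⁺¹) := by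
    rw [star_sub, star_one, hEsa.star_eq]
  have hg1c : Continuous (fun t : ℝ => 1 - f t) := continuous_const.sub hfc
  have h1 : (1 : A⁺¹) - (e : A⁺¹) = cfc (fun t : ℝ => 1 - f t) (h : A⁺¹) := by
    rw [hE, cfc_sub (R := ℝ) (f := fun _ => (1 : ℝ)) (g := f) (a := (h : A⁺¹))
      continuous_const.continuousOn hfc.continuousOn, cfc_const_one ℝ ((h : A⁺¹)) hHsa]
  have hconj : ((1 : A⁺¹) - (e : A⁺¹)) * ((h : A⁺¹) * ((1 : A⁺¹) - (e : A⁺¹))) =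
      cfc (fun t => (1 - f t) * (t * (1 - f t))) (h : A⁺¹) := by
    have hm2 : cfc (fun t : ℝ => t * (1 - f t)) (h : A⁺¹) =
        (h : A⁺¹) * cfc (fun t : ℝ => 1 - f t) (h : A⁺¹) := by
      rw [cfc_mul (fun t : ℝ => t) (fun t : ℝ => 1 - f t) ((h : A⁺¹))
        continuous_id.continuousOn hg1c.continuousOn, cfc_id' ℝ ((h : A⁺¹)) hHsa]
    have hm1 : cfc (fun t : ℝ => (1 - f t) * (t * (1 - f t))) (h : A⁺¹) =
        cfc (fun t : ℝ => 1 - f t) (h : A⁺¹) * cfc (fun t : ℝ => t * (1 - f t)) (h : A⁺¹) :=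
      cfc_mul _ _ ((h : A⁺¹)) hg1c.continuousOn
        (continuous_id.mul hg1c).continuousOn
    rw [hm1, hm2, ← h1]
  have hconjnorm : ‖((1 : A⁺¹) - (e : A⁺¹)) * ((h : A⁺¹) * ((1 : A⁺¹) - (e : A⁺¹)))‖ ≤ c := by
    rw [hconj]
    refine norm_cfc_le hc0.le fun t ht => ?_
    have ht0 : 0 ≤ t := hspec t ht
    have h1f0 : 0 ≤ 1 - f t := by linarith [(hf01 t).2]
    rw [Real.norm_eq_abs, abs_of_nonneg (by positivity)]
    have h1ft : 1 - f t = c ^ 2 / (t ^ 2 + c ^ 2) := by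
      rw [hf]; field_simp; ring
    have key : (1 - f t) ^ 2 * t ≤ c := by
      rcases le_or_gt t c with h' | h'
      · have h1f1 : 1 - f t ≤ 1 := by linarith [(hf01 t).1]
        have hsq : (1 - f t) ^ 2 ≤ 1 := by nlinarith
        calc (1 - f t) ^ 2 * t ≤ 1 * t := mul_le_mul_of_nonneg_right hsq ht0
          _ = t := one_mul t
          _ ≤ c := h'
      · have ht0' : 0 < t := lt_trans hc0 h'
        rw [h1ft, div_pow, div_mul_eq_mul_div, div_le_iff₀ (by positivity)]
        have e1 : (2 * t * c) ^ 2 ≤ (t ^ 2 + c ^ 2) ^ 2 := by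
          have h2tc : 2 * t * c ≤ t ^ 2 + c ^ 2 := by nlinarith [sq_nonneg (t - c)]
          have h2tc0 : (0 : ℝ) ≤ 2 * t * c := by positivity
          nlinarith
        have e2 : c * (2 * t * c) ^ 2 ≤ c * (t ^ 2 + c ^ 2) ^ 2 :=
          mul_le_mul_of_nonneg_left e1 hc0.le
        have key0 : (0 : ℝ) ≤ c ^ 3 * t * (4 * t - c) :=
          mul_nonneg (mul_nonneg (pow_pos hc0 3).le ht0'.le) (by linarith)
        calc (c ^ 2) ^ 2 * t = c ^ 4 * t := by ring
          _ ≤ 4 * c ^ 3 * t ^ 2 := by nlinarith [key0]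
          _ = c * (2 * t * c) ^ 2 := by ring
          _ ≤ c * (t ^ 2 + c ^ 2) ^ 2 := e2
    calc (1 - f t) * (t * (1 - f t)) = (1 - f t) ^ 2 * t := by ring
      _ ≤ c := key
  -- now the two norm estimates
  have main : ∀ x : A⁺¹, x * star x ≤ (h : A⁺¹) → ‖((1 : A⁺¹) - (e : A⁺¹)) * x‖ ≤ δ := by
    intro x hx
    have hsq : ‖((1 : A⁺¹) - (e : A⁺¹)) * x‖ * ‖((1 : A⁺¹) - (e : A⁺¹)) * x‖ =
        ‖((1 : A⁺¹) - (e : A⁺¹)) * (x * star x) * ((1 : A⁺¹) - (e : A⁺¹))‖ := by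
      rw [← CStarRing.norm_self_mul_star (x := ((1 : A⁺¹) - (e : A⁺¹)) * x)]
      congr 1
      rw [star_mul, h1E]
      noncomm_ring
    have hle : ‖((1 : A⁺¹) - (e : A⁺¹)) * (x * star x) * ((1 : A⁺¹) - (e : A⁺¹))‖ ≤ c := by
      refine le_trans ?_ (mul_assoc ((1 : A⁺¹) - (e : A⁺¹)) ((h : A⁺¹)) _ ▸ hconjnorm)
      have hconj_le : ((1 : A⁺¹) - (e : A⁺¹)) * (x * star x) * ((1 : A⁺¹) - (e : A⁺¹)) ≤
          ((1 : A⁺¹) - (e : A⁺¹)) * (h : A⁺¹) * ((1 : A⁺¹) - (e : A⁺¹)) := by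
        have := star_left_conjugate_le_conjugate hx ((1 : A⁺¹) - (e : A⁺¹))
        rwa [h1E] at this
      have hconj_0 : (0 : A⁺¹) ≤ ((1 : A⁺¹) - (e : A⁺¹)) * (x * star x) * ((1 : A⁺¹) - (e : A⁺¹)) := by
        have := star_left_conjugate_nonneg (mul_star_self_nonneg x) ((1 : A⁺¹) - (e : A⁺¹))
        rwa [h1E] at this
      exact CStarAlgebra.norm_le_norm_of_nonneg_of_le hconj_0 hconj_le
    have h1 : ‖((1 : A⁺¹) - (e : A⁺¹)) * x‖ * ‖((1 : A⁺¹) - (e : A⁺¹)) * x‖ ≤ δ * δ := by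
      rw [hsq]
      refine hle.trans (le_of_eq ?_)
      rw [hc]; ring
    nlinarith [norm_nonneg (((1 : A⁺¹) - (e : A⁺¹)) * x)]
  constructor
  · have := main (b : A⁺¹) hble1
    rw [← Unitization.norm_inr (𝕜 := ℂ) (b - e * b)]
    rw [Unitization.inr_sub, Unitization.inr_mul]
    calc ‖(b : A⁺¹) - (e : A⁺¹) * b‖ = ‖((1 : A⁺¹) - (e : A⁺¹)) * b‖ := by noncomm_ring
      _ ≤ δ := this
  · have hxs : star (b : A⁺¹) * (star (star (b : A⁺¹))) ≤ (h : A⁺¹) := by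
      rwa [star_star]
    have := main (star (b : A⁺¹)) hxs
    rw [← Unitization.norm_inr (𝕜 := ℂ) (b - b * e)]
    rw [Unitization.inr_sub, Unitization.inr_mul]
    calc ‖(b : A⁺¹) - (b : A⁺¹) * e‖ = ‖star ((b : A⁺¹) - (b : A⁺¹) * e)‖ := (norm_star _).symm
      _ = ‖((1 : A⁺¹) - (e : A⁺¹)) * star (b : A⁺¹)‖ := by
          rw [star_sub, star_mul, hEsa.star_eq]; congr 1; noncomm_ring
      _ ≤ δ := this


end RokhlinProof

open RokhlinProof in
set_option maxHeartbeats 2000000 in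
/-- If an action of a finite group on a C*-algebra has the multiplier Rokhlin property,
then it has the Rokhlin property. Here `𝓜(ℂ, A)` is the multiplier algebra of `A`,
`DoubleCentralizer.coe ℂ` is the canonical embedding `A → 𝓜(ℂ, A)`, and `αM` is the
extension of the action to the multiplier algebra. -/
theorem stmt3 {G A : Type*} [Group G] [Fintype G] [NonUnitalCStarAlgebra A]
    (α : G → (A ≃⋆ₐ[ℂ] A)) (hα : ∀ g h a, α (g * h) a = α g (α h a))
    (αM : G → (𝓜(ℂ, A) ≃⋆ₐ[ℂ] 𝓜(ℂ, A)))
    (hαM : ∀ (g : G) (a : A),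
      αM g (DoubleCentralizer.coe ℂ a) = DoubleCentralizer.coe ℂ (α g a))
    (hMultRokhlin : ∀ (F : Finset A) (ε : ℝ), 0 < ε →
      ∃ p : G → 𝓜(ℂ, A),
        (∀ g, IsSelfAdjoint (p g) ∧ IsIdempotentElem (p g)) ∧
        (∀ g h, g ≠ h → p g * p h = 0) ∧
        (∑ g, p g) = 1 ∧
        (∀ g h, ‖αM g (p h) - p (g * h)‖ < ε) ∧
        (∀ a ∈ F, ∀ g,
          ‖p g * DoubleCentralizer.coe ℂ a - DoubleCentralizer.coe ℂ a * p g‖ < ε)) :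
    RokhlinProperty α := by
  classical
  intro ε hε F
  -- the embedding and its properties
  have hnorm : ∀ x : A, ‖DoubleCentralizer.coe ℂ x‖ = ‖x‖ := norm_coe
  have hmul : ∀ x y : A, DoubleCentralizer.coe ℂ (x * y) =
      DoubleCentralizer.coe ℂ x * DoubleCentralizer.coe ℂ y := fun x y =>
    map_mul (DoubleCentralizer.coeHom (𝕜 := ℂ) (A := A)) x y
  have hsub : ∀ x y : A, DoubleCentralizer.coe ℂ (x - y) =
      DoubleCentralizer.coe ℂ x - DoubleCentralizer.coe ℂ y := fun x y =>
    map_sub (DoubleCentralizer.coeHom (𝕜 := ℂ) (A := A)) x y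
  have hstar : ∀ x : A, DoubleCentralizer.coe ℂ (star x) =
      star (DoubleCentralizer.coe ℂ x) := fun x =>
    map_star (DoubleCentralizer.coeHom (𝕜 := ℂ) (A := A)) x
  -- group action basics
  have hone : ∀ a : A, α 1 a = a := fun a => by
    have h1 : α 1 (α 1 a) = α 1 a := (hα 1 1 a).symm.trans (by rw [one_mul])
    exact (α 1).injective h1
  have hinvcomp : ∀ (g : G) (a : A), α g (α g⁻¹ a) = a := fun g a => by
    rw [← hα, mul_inv_cancel, hone]
  -- numerics
  set n : ℕ := Fintype.card G with hn
  have hn0 : 0 < n := Fintype.card_pos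
  have hn1 : (1 : ℝ) ≤ (n : ℝ) := by exact_mod_cast hn0
  set η : ℝ := ε / (8 * n) with hηdef
  have hη : 0 < η := by
    rw [hηdef]; positivity
  have hεη : 8 * (n : ℝ) * η = ε := by
    rw [hηdef]; field_simp
  -- approximate unit
  set F' : Finset A := (Finset.univ ×ˢ F).image (fun q : G × A => α q.1 q.2) with hF'
  obtain ⟨e, hesa, hecontr, heapprox⟩ := exists_approx_unit F' hη
  have hmemF' : ∀ (g : G), ∀ a ∈ F, α g a ∈ F' := fun g a ha => by
    rw [hF']
    exact Finset.mem_image.mpr ⟨(g, a), Finset.mem_product.mpr ⟨Finset.mem_univ g, ha⟩, rfl⟩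
  -- averaged approximate unit
  set e' : A := ((n : ℂ))⁻¹ • ∑ g : G, α g e with he'
  have hnC : ((n : ℂ)) ≠ 0 := by exact_mod_cast hn0.ne'
  have hnormn : ‖((n : ℂ))⁻¹‖ = ((n : ℝ))⁻¹ := by
    rw [norm_inv]; norm_num
  have he'sa : IsSelfAdjoint e' := by
    rw [he', IsSelfAdjoint, star_smul, star_sum]
    congr 1
    · simp
    · exact Finset.sum_congr rfl fun g _ => by rw [← map_star, hesa.star_eq]
  have he'norm : ‖e'‖ ≤ 1 := by
    rw [he']
    calc ‖((n : ℂ))⁻¹ • ∑ g : G, α g e‖ = ‖((n : ℂ))⁻¹‖ * ‖∑ g : G, α g e‖ := norm_smul _ _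
      _ ≤ ((n : ℝ))⁻¹ * ∑ g : G, ‖α g e‖ := by
          rw [hnormn]
          exact mul_le_mul_of_nonneg_left (norm_sum_le _ _) (by positivity)
      _ ≤ ((n : ℝ))⁻¹ * ∑ _g : G, (1 : ℝ) := by
          refine mul_le_mul_of_nonneg_left (Finset.sum_le_sum fun g _ => ?_) (by positivity)
          rw [NonUnitalStarAlgHom.norm_map (α g) (α g).injective e]
          exact hecontr
      _ = 1 := by
          rw [Finset.sum_const, Finset.card_univ, ← hn, nsmul_eq_mul, mul_one]
          field_simp
  have he'inv : ∀ g : G, α g e' = e' := by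
    intro g
    rw [he', map_smul, map_sum]
    congr 1
    rw [← Equiv.sum_comp (Equiv.mulLeft g) (fun k => α k e)]
    exact Finset.sum_congr rfl fun k _ => by rw [Equiv.coe_mulLeft, ← hα]
  have hsum_na : ∀ a : A, ((n : ℂ))⁻¹ • ∑ _g : G, a = a := by
    intro a
    rw [Finset.sum_const, Finset.card_univ, ← hn, ← Nat.cast_smul_eq_nsmul ℂ, smul_smul,
      inv_mul_cancel₀ hnC, one_smul]
  have he'l : ∀ a ∈ F, ‖a - e' * a‖ ≤ η := by
    intro a ha
    have hterm : ∀ g : G, ‖a - α g e * a‖ ≤ η := by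
      intro g
      have hb : α g⁻¹ a ∈ F' := hmemF' g⁻¹ a ha
      have : α g (α g⁻¹ a - e * α g⁻¹ a) = a - α g e * a := by
        rw [map_sub, map_mul, hinvcomp]
      calc ‖a - α g e * a‖ = ‖α g (α g⁻¹ a - e * α g⁻¹ a)‖ := by rw [this]
        _ = ‖α g⁻¹ a - e * α g⁻¹ a‖ :=
            NonUnitalStarAlgHom.norm_map (α g) (α g).injective _
        _ ≤ η := (heapprox _ hb).1
    have hrw : a - e' * a = ((n : ℂ))⁻¹ • ∑ g : G, (a - α g e * a) := by
      rw [Finset.sum_sub_distrib, smul_sub, hsum_na, he', smul_mul_assoc, Finset.sum_mul]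
    rw [hrw]
    calc ‖((n : ℂ))⁻¹ • ∑ g : G, (a - α g e * a)‖
        = ((n : ℝ))⁻¹ * ‖∑ g : G, (a - α g e * a)‖ := by rw [norm_smul, hnormn]
      _ ≤ ((n : ℝ))⁻¹ * ∑ g : G, ‖a - α g e * a‖ :=
          mul_le_mul_of_nonneg_left (norm_sum_le _ _) (by positivity)
      _ ≤ ((n : ℝ))⁻¹ * ∑ _g : G, η :=
          mul_le_mul_of_nonneg_left (Finset.sum_le_sum fun g _ => hterm g) (by positivity)
      _ = η := by
          rw [Finset.sum_const, Finset.card_univ, ← hn, nsmul_eq_mul]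
          field_simp
  have he'r : ∀ a ∈ F, ‖a - a * e'‖ ≤ η := by
    intro a ha
    have hterm : ∀ g : G, ‖a - a * α g e‖ ≤ η := by
      intro g
      have hb : α g⁻¹ a ∈ F' := hmemF' g⁻¹ a ha
      have : α g (α g⁻¹ a - α g⁻¹ a * e) = a - a * α g e := by
        rw [map_sub, map_mul, hinvcomp]
      calc ‖a - a * α g e‖ = ‖α g (α g⁻¹ a - α g⁻¹ a * e)‖ := by rw [this]
        _ = ‖α g⁻¹ a - α g⁻¹ a * e‖ :=
            NonUnitalStarAlgHom.norm_map (α g) (α g).injective _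
        _ ≤ η := (heapprox _ hb).2
    have hrw : a - a * e' = ((n : ℂ))⁻¹ • ∑ g : G, (a - a * α g e) := by
      rw [Finset.sum_sub_distrib, smul_sub, hsum_na, he', mul_smul_comm, Finset.mul_sum]
    rw [hrw]
    calc ‖((n : ℂ))⁻¹ • ∑ g : G, (a - a * α g e)‖
        = ((n : ℝ))⁻¹ * ‖∑ g : G, (a - a * α g e)‖ := by rw [norm_smul, hnormn]
      _ ≤ ((n : ℝ))⁻¹ * ∑ g : G, ‖a - a * α g e‖ :=
          mul_le_mul_of_nonneg_left (norm_sum_le _ _) (by positivity)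
      _ ≤ ((n : ℝ))⁻¹ * ∑ _g : G, η :=
          mul_le_mul_of_nonneg_left (Finset.sum_le_sum fun g _ => hterm g) (by positivity)
      _ = η := by
          rw [Finset.sum_const, Finset.card_univ, ← hn, nsmul_eq_mul]
          field_simp
  -- the squared unit
  set u : A := e' * e' with hu
  have hu1 : ‖u‖ ≤ 1 := by
    rw [hu]
    calc ‖e' * e'‖ ≤ ‖e'‖ * ‖e'‖ := norm_mul_le _ _
      _ ≤ 1 := by nlinarith [norm_nonneg e']
  have huinv : ∀ g : G, α g u = u := fun g => by rw [hu, map_mul, he'inv]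
  have hul : ∀ a ∈ F, ‖u * a - a‖ ≤ 2 * η := by
    intro a ha
    have h1 : u * a - a = -((a - e' * a) + e' * (a - e' * a)) := by
      rw [hu]; noncomm_ring
    rw [h1, norm_neg]
    calc ‖(a - e' * a) + e' * (a - e' * a)‖ ≤ ‖a - e' * a‖ + ‖e' * (a - e' * a)‖ :=
        norm_add_le _ _
      _ ≤ ‖a - e' * a‖ + ‖e'‖ * ‖a - e' * a‖ := by
          linarith [norm_mul_le e' (a - e' * a)]
      _ ≤ 2 * η := by nlinarith [he'l a ha, he'norm, norm_nonneg (a - e' * a), norm_nonneg e']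
  have hur : ∀ a ∈ F, ‖a - a * u‖ ≤ 2 * η := by
    intro a ha
    have h1 : a - a * u = (a - a * e') + (a - a * e') * e' := by
      rw [hu]; noncomm_ring
    rw [h1]
    calc ‖(a - a * e') + (a - a * e') * e'‖ ≤ ‖a - a * e'‖ + ‖(a - a * e') * e'‖ :=
        norm_add_le _ _
      _ ≤ ‖a - a * e'‖ + ‖a - a * e'‖ * ‖e'‖ := by
          linarith [norm_mul_le (a - a * e') e']
      _ ≤ 2 * η := by nlinarith [he'r a ha, he'norm, norm_nonneg (a - a * e'), norm_nonneg e']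
  -- get the Rokhlin projections
  obtain ⟨p, hproj, horth, hsum, hcov, hcomm⟩ := hMultRokhlin F η hη
  have hpnorm : ∀ g, ‖p g‖ ≤ 1 := by
    intro g
    rcases eq_or_ne (p g) 0 with h0 | h0
    · simp [h0]
    · have h1 : ‖p g‖ * ‖p g‖ = ‖p g‖ := by
        rw [← CStarRing.norm_star_mul_self, (hproj g).1.star_eq, (hproj g).2.eq]
      nlinarith [norm_pos_iff.mpr h0]
  -- the Rokhlin elements
  set U : 𝓜(ℂ, A) := DoubleCentralizer.coe ℂ u with hU
  have hUnorm : ‖U‖ ≤ 1 := by rw [hU, hnorm]; exact hu1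
  set s : G → A := fun g => (p g).snd e' with hs
  have hsι : ∀ g, DoubleCentralizer.coe ℂ (s g) = DoubleCentralizer.coe ℂ e' * p g :=
    fun g => (coe_mul (p g) e').symm
  have hzero : DoubleCentralizer.coe ℂ (0 : A) = (0 : 𝓜(ℂ, A)) := by
    simpa using hsub 0 0
  have hrι : ∀ g, DoubleCentralizer.coe ℂ (star (s g) * s g) = p g * U * p g := by
    intro g
    have h1 : star (DoubleCentralizer.coe ℂ e' * p g) = p g * DoubleCentralizer.coe ℂ e' := by
      rw [star_mul, (hproj g).1.star_eq, ← hstar, he'sa.star_eq]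
    have h2 : DoubleCentralizer.coe ℂ (star (s g) * s g) =
        star (DoubleCentralizer.coe ℂ e' * p g) * (DoubleCentralizer.coe ℂ e' * p g) := by
      rw [hmul, hstar, hsι]
    rw [h2, h1, hU, hu, hmul]
    noncomm_ring
  refine ⟨fun g => star (s g) * s g, fun g => ⟨s g, rfl⟩, ?_, ?_, ?_, ?_, ?_⟩
  · -- norm bound
    intro g
    rw [← hnorm (star (s g) * s g), hrι g]
    calc ‖p g * U * p g‖ ≤ ‖p g‖ * ‖U‖ * ‖p g‖ := norm_mul_mul_le _ _ _
      _ ≤ 1 := mul3_le_one (norm_nonneg _) (hpnorm g) (norm_nonneg _) hUnorm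
          (norm_nonneg _) (hpnorm g)
  · -- orthogonality
    intro g h hgh
    refine coe_inj ?_
    rw [hmul (star (s g) * s g) (star (s h) * s h), hrι g, hrι h, hzero]
    have hkey : (p g * U * p g) * (p h * U * p h) = (p g * U) * (p g * p h) * (U * p h) := by
      noncomm_ring
    rw [hkey, horth g h hgh, mul_zero, zero_mul]
  · -- approximate equivariance
    intro g h
    rw [← hnorm (α g (star (s h) * s h) - star (s (g * h)) * s (g * h)),
      hsub (α g (star (s h) * s h)) (star (s (g * h)) * s (g * h)),
      ← hαM g (star (s h) * s h), hrι h, hrι (g * h)]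
    have hUinv : αM g U = U := by rw [hU, hαM, huinv]
    set Q : 𝓜(ℂ, A) := αM g (p h) with hQ
    have hQnorm : ‖Q‖ ≤ 1 := by
      rw [hQ, NonUnitalStarAlgHom.norm_map (αM g) (αM g).injective]
      exact hpnorm h
    have hQP : ‖Q - p (g * h)‖ ≤ η := (hcov g h).le
    rw [map_mul, map_mul, hUinv, ← hQ]
    have hkey : Q * U * Q - p (g * h) * U * p (g * h) =
        (Q - p (g * h)) * (U * Q) + p (g * h) * U * (Q - p (g * h)) := by
      noncomm_ring
    rw [hkey]
    have hUQ : ‖U * Q‖ ≤ 1 := le_trans (norm_mul_le _ _)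
      (mul_le_one_c (norm_nonneg _) hUnorm (norm_nonneg _) hQnorm zero_le_one)
    have h1 : ‖(Q - p (g * h)) * (U * Q)‖ ≤ η := by
      calc ‖(Q - p (g * h)) * (U * Q)‖ ≤ ‖Q - p (g * h)‖ * ‖U * Q‖ := norm_mul_le _ _
        _ ≤ η := mul_le_c_one (norm_nonneg _) hQP (norm_nonneg _) hUQ
    have h2 : ‖p (g * h) * U * (Q - p (g * h))‖ ≤ η := by
      calc ‖p (g * h) * U * (Q - p (g * h))‖ ≤ ‖p (g * h)‖ * ‖U‖ * ‖Q - p (g * h)‖ :=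
          norm_mul_mul_le _ _ _
        _ ≤ η := mul3_le_c (norm_nonneg _) (hpnorm (g * h)) (norm_nonneg _) hUnorm
            (norm_nonneg _) hQP
    calc ‖(Q - p (g * h)) * (U * Q) + p (g * h) * U * (Q - p (g * h))‖
        ≤ ‖(Q - p (g * h)) * (U * Q)‖ + ‖p (g * h) * U * (Q - p (g * h))‖ := norm_add_le _ _
      _ ≤ 2 * η := by linarith
      _ < ε := by nlinarith [mul_pos hη (show (0:ℝ) < 4 * (n:ℝ) - 1 by linarith)]
  · -- approximate centrality
    intro a ha g
    rw [← hnorm (star (s g) * s g * a - a * (star (s g) * s g)),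
      hsub (star (s g) * s g * a) (a * (star (s g) * s g)),
      hmul (star (s g) * s g) a, hmul a (star (s g) * s g), hrι g]
    set At : 𝓜(ℂ, A) := DoubleCentralizer.coe ℂ a with hAt
    set P : 𝓜(ℂ, A) := p g with hP
    have hcomm' : ‖P * At - At * P‖ ≤ η := (hcomm a ha g).le
    have hUA : ‖U * At - At * U‖ ≤ 4 * η := by
      have h1 : U * At - At * U = (U * At - At) + (At - At * U) := by noncomm_ring
      have h2 : ‖U * At - At‖ ≤ 2 * η := by
        rw [hU, hAt, ← hmul, ← hsub, hnorm]
        exact hul a ha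
      have h3 : ‖At - At * U‖ ≤ 2 * η := by
        rw [hU, hAt, ← hmul, ← hsub, hnorm]
        exact hur a ha
      calc ‖U * At - At * U‖ = ‖(U * At - At) + (At - At * U)‖ := by rw [h1]
        _ ≤ ‖U * At - At‖ + ‖At - At * U‖ := norm_add_le _ _
        _ ≤ 4 * η := by linarith
    have hkey : P * U * P * At - At * (P * U * P) =
        (P * U) * (P * At - At * P) + P * (U * At - At * U) * P +
          (P * At - At * P) * (U * P) := by
      noncomm_ring
    rw [hkey]
    have hPn : ‖P‖ ≤ 1 := hpnorm g
    have b1 : ‖(P * U) * (P * At - At * P)‖ ≤ η := by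
      calc ‖(P * U) * (P * At - At * P)‖ ≤ ‖P * U‖ * ‖P * At - At * P‖ := norm_mul_le _ _
        _ ≤ η := mul_le_one_c (norm_nonneg _)
            (le_trans (norm_mul_le _ _) (mul_le_one_c (norm_nonneg _) hPn (norm_nonneg _)
              hUnorm zero_le_one))
            (norm_nonneg _) hcomm' hη.le
    have b2 : ‖P * (U * At - At * U) * P‖ ≤ 4 * η := by
      calc ‖P * (U * At - At * U) * P‖ ≤ ‖P‖ * ‖U * At - At * U‖ * ‖P‖ := norm_mul_mul_le _ _ _
        _ ≤ 4 * η := by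
            have h4 : (0:ℝ) ≤ 4 * η := by positivity
            have h5 : ‖P‖ * ‖U * At - At * U‖ ≤ 4 * η :=
              mul_le_one_c (norm_nonneg _) hPn (norm_nonneg _) hUA h4
            exact mul_le_c_one (mul_nonneg (norm_nonneg _) (norm_nonneg _)) h5
              (norm_nonneg _) hPn
    have b3 : ‖(P * At - At * P) * (U * P)‖ ≤ η := by
      calc ‖(P * At - At * P) * (U * P)‖ ≤ ‖P * At - At * P‖ * ‖U * P‖ := norm_mul_le _ _
        _ ≤ η := mul_le_c_one (norm_nonneg _) hcomm' (norm_nonneg _)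
            (le_trans (norm_mul_le _ _) (mul_le_one_c (norm_nonneg _) hUnorm (norm_nonneg _)
              hPn zero_le_one))
    have n1 := norm_add₃_le (E := 𝓜(ℂ, A)) (a := (P * U) * (P * At - At * P))
      (b := P * (U * At - At * U) * P) (c := (P * At - At * P) * (U * P))
    have hfin : (0:ℝ) < 2 * (n:ℝ) * η := by positivity
    calc ‖(P * U) * (P * At - At * P) + P * (U * At - At * U) * P +
          (P * At - At * P) * (U * P)‖
        ≤ ‖(P * U) * (P * At - At * P)‖ + ‖P * (U * At - At * U) * P‖ +
            ‖(P * At - At * P) * (U * P)‖ := n1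
      _ ≤ 6 * η := by linarith
      _ < ε := by nlinarith [mul_pos hη (show (0:ℝ) < 4 * (n:ℝ) - 3 by linarith)]
  · -- approximate unit property
    intro a ha
    set At : 𝓜(ℂ, A) := DoubleCentralizer.coe ℂ a with hAt
    have hsumcoe : DoubleCentralizer.coe ℂ (∑ g : G, star (s g) * s g) =
        ∑ g : G, p g * U * p g := by
      have hms : DoubleCentralizer.coe ℂ (∑ g : G, star (s g) * s g) =
          ∑ g : G, DoubleCentralizer.coe ℂ (star (s g) * s g) :=
        map_sum (DoubleCentralizer.coeHom (𝕜 := ℂ) (A := A)) _ _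
      rw [hms]
      exact Finset.sum_congr rfl fun g _ => hrι g
    have h3 : ∑ g : G, (p g * U * p g * At - p g * At) =
        (∑ g : G, p g * U * p g) * At - At := by
      rw [Finset.sum_sub_distrib, ← Finset.sum_mul, ← Finset.sum_mul, hsum, one_mul]
    rw [← hnorm ((∑ g : G, star (s g) * s g) * a - a),
      hsub ((∑ g : G, star (s g) * s g) * a) a, hmul (∑ g : G, star (s g) * s g) a,
      hsumcoe, ← hAt, ← h3]
    have hterm : ∀ g : G, ‖p g * U * p g * At - p g * At‖ ≤ 4 * η := by
      intro g
      set P : 𝓜(ℂ, A) := p g with hP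
      have hPP : P * P = P := (hproj g).2
      have hid : P * U * (P * At - At * P) - P * (P * At - At * P) + P * ((U * At - At) * P) =
          P * U * P * At - P * P * At := by noncomm_ring
      rw [hPP] at hid
      rw [← hid]
      have hPn : ‖P‖ ≤ 1 := hpnorm g
      have hcomm' : ‖P * At - At * P‖ ≤ η := (hcomm a ha g).le
      have hUA : ‖U * At - At‖ ≤ 2 * η := by
        rw [hU, hAt, ← hmul, ← hsub, hnorm]
        exact hul a ha
      have b1 : ‖P * U * (P * At - At * P)‖ ≤ η := by
        calc ‖P * U * (P * At - At * P)‖ ≤ ‖P‖ * ‖U‖ * ‖P * At - At * P‖ :=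
            norm_mul_mul_le _ _ _
          _ ≤ η := mul3_le_c (norm_nonneg _) hPn (norm_nonneg _) hUnorm
              (norm_nonneg _) hcomm' 
      have b2 : ‖P * (P * At - At * P)‖ ≤ η := by
        calc ‖P * (P * At - At * P)‖ ≤ ‖P‖ * ‖P * At - At * P‖ := norm_mul_le _ _
          _ ≤ η := mul_le_one_c (norm_nonneg _) hPn (norm_nonneg _) hcomm' hη.le
      have b3 : ‖P * ((U * At - At) * P)‖ ≤ 2 * η := by
        have h2 : ‖(U * At - At) * P‖ ≤ 2 * η := le_trans (norm_mul_le _ _)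
          (mul_le_c_one (norm_nonneg _) hUA (norm_nonneg _) hPn)
        calc ‖P * ((U * At - At) * P)‖ ≤ ‖P‖ * ‖(U * At - At) * P‖ := norm_mul_le _ _
          _ ≤ 2 * η := mul_le_one_c (norm_nonneg _) hPn (norm_nonneg _) h2 (by positivity)
      have n1 := norm_add_le (P * U * (P * At - At * P) - P * (P * At - At * P))
        (P * ((U * At - At) * P))
      have n2 := norm_sub_le (P * U * (P * At - At * P)) (P * (P * At - At * P))
      linarith
    calc ‖∑ g : G, (p g * U * p g * At - p g * At)‖
        ≤ ∑ g : G, ‖p g * U * p g * At - p g * At‖ := norm_sum_le _ _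
      _ ≤ ∑ _g : G, 4 * η := Finset.sum_le_sum fun g _ => hterm g
      _ = 4 * n * η := by rw [Finset.sum_const, Finset.card_univ, ← hn, nsmul_eq_mul]; ring
      _ < ε := by nlinarith [mul_pos hη (show (0:ℝ) < (n:ℝ) by linarith)]
end

section
/- Let X = {1/n : n ∈ ℕ, n ≥ 1} ⊆ ℝ with the subspace topology, and let φ : X → X be the map defined by φ(1/(2n−1)) = 1/(2n) and φ(1/(2n)) = 1/(2n−1) for all n ≥ 1 (so φ is a homeomorphism with φ ∘ φ = id). Let α be the *-automorphism of C₀(X) given by α(f) = f ∘ φ; then α² = id, so α generates an action of ℤ/2ℤ on C₀(X). This action has the Rokhlin property. -/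
open scoped ZeroAtInfty

/-- The space `X = {1/n : n ∈ ℕ, n ≥ 1} ⊆ ℝ`, with the subspace topology. -/
def Xset : Set ℝ := {x : ℝ | ∃ n : ℕ, 0 < n ∧ x = 1 / n}

noncomputable def nx (x : Xset) : ℕ := Classical.choose x.2

lemma nx_pos (x : Xset) : 0 < nx x := (Classical.choose_spec x.2).1

lemma nx_spec (x : Xset) : (x : ℝ) = 1 / nx x := (Classical.choose_spec x.2).2

lemma mem_Xset (m : ℕ) (hm : 0 < m) : (1 / (m : ℝ)) ∈ Xset := ⟨m, hm, rfl⟩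

lemma nx_coe (m : ℕ) (hm : 0 < m) (h : (1/(m:ℝ)) ∈ Xset) : nx ⟨1/(m:ℝ), h⟩ = m := by
  have h1 := nx_spec ⟨1/(m:ℝ), h⟩
  have h2 := nx_pos ⟨1/(m:ℝ), h⟩
  have hm' : (0:ℝ) < m := by exact_mod_cast hm
  have hn' : (0:ℝ) < (nx ⟨1/(m:ℝ), h⟩ : ℝ) := by exact_mod_cast h2
  have : ((nx ⟨1/(m:ℝ), h⟩ : ℝ)) = m := by
    field_simp at h1
    exact_mod_cast h1
  exact_mod_cast this

lemma nx_inj : Function.Injective nx := by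
  intro x y h
  have hx := nx_spec x
  have hy := nx_spec y
  apply Subtype.ext
  rw [hx, hy, h]

lemma key_gap (m n : ℕ) (hm : 0 < m) (hn : 0 < n) (hne : m ≠ n) :
    (1:ℝ) / (n * (n+1)) ≤ |1/(m:ℝ) - 1/(n:ℝ)| := by
  have hm' : (1:ℝ) ≤ m := by exact_mod_cast hm
  have hn' : (1:ℝ) ≤ n := by exact_mod_cast hn
  rcases lt_or_gt_of_ne hne with hlt | hgt
  · -- m < n : 1/m - 1/n ≥ (n-m)/(mn) ≥ 1/(mn) ≥ 1/(n(n+1))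
    have h1 : (m:ℝ) + 1 ≤ n := by exact_mod_cast hlt
    have key : (1:ℝ)/(n*(n+1)) ≤ 1/(m:ℝ) - 1/(n:ℝ) := by
      rw [div_sub_div _ _ (by positivity) (by positivity), one_mul, mul_one,
        div_le_div_iff₀ (by positivity) (by positivity)]
      nlinarith [mul_le_mul_of_nonneg_right (by linarith : (1:ℝ) ≤ (n:ℝ)-(m:ℝ))
          (by positivity : (0:ℝ) ≤ (n:ℝ)*((n:ℝ)+1)),
        mul_nonneg (by positivity : (0:ℝ) ≤ (n:ℝ)) (by linarith : (0:ℝ) ≤ (n:ℝ)+1-(m:ℝ))]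
    calc (1:ℝ)/(n*(n+1)) ≤ 1/(m:ℝ) - 1/(n:ℝ) := key
      _ ≤ |1/(m:ℝ) - 1/(n:ℝ)| := le_abs_self _
  · have h1 : (n:ℝ) + 1 ≤ m := by exact_mod_cast hgt
    have key : (1:ℝ)/(n*(n+1)) ≤ 1/(n:ℝ) - 1/(m:ℝ) := by
      rw [div_sub_div _ _ (by positivity) (by positivity), one_mul, mul_one,
        div_le_div_iff₀ (by positivity) (by positivity)]
      nlinarith [mul_nonneg (by positivity : (0:ℝ) ≤ (n:ℝ)*(n:ℝ))
          (by linarith : (0:ℝ) ≤ (m:ℝ)-(n:ℝ)-1)]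
    calc (1:ℝ)/(n*(n+1)) ≤ 1/(n:ℝ) - 1/(m:ℝ) := key
      _ ≤ |1/(m:ℝ) - 1/(n:ℝ)| := by rw [abs_sub_comm]; exact le_abs_self _

instance : DiscreteTopology Xset := by
  rw [discreteTopology_iff_isOpen_singleton]
  intro x
  have hx := nx_spec x
  have hxp := nx_pos x
  set n := nx x with hn
  have hball : ({x} : Set Xset) = Subtype.val ⁻¹' Metric.ball (x : ℝ) (1/(n*(n+1))) := by
    ext y
    simp only [Set.mem_singleton_iff, Set.mem_preimage, Metric.mem_ball]
    constructor
    · rintro rfl; simp; positivity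
    · intro hy
      have hy' := nx_spec y
      have hyp := nx_pos y
      by_contra hne
      have hne' : nx y ≠ n := fun h => hne (nx_inj (h.trans hn))
      have := key_gap (nx y) n hyp hxp hne'
      rw [← hy', ← hx] at this
      rw [Real.dist_eq] at hy
      linarith
  rw [hball]
  exact IsOpen.preimage continuous_subtype_val Metric.isOpen_ball

lemma finite_le (M : ℕ) : {x : Xset | nx x ≤ M}.Finite := by
  have : {x : Xset | nx x ≤ M} = nx ⁻¹' (Set.Iic M) := rfl
  rw [this]
  exact Set.Finite.preimage (Set.injOn_of_injective nx_inj) (Set.finite_Iic M)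

noncomputable def ind (N : ℕ) (p : ZMod 2) : C₀(Xset, ℂ) where
  toFun := fun x => if nx x ≤ 2*N ∧ (nx x : ZMod 2) = p then 1 else 0
  continuous_toFun := continuous_of_discreteTopology
  zero_at_infty' := by
    have hfin := finite_le (2*N)
    have hmem : {x : Xset | nx x ≤ 2*N}ᶜ ∈ Filter.cocompact Xset :=
      Filter.mem_cocompact.2 ⟨_, hfin.isCompact, subset_rfl⟩
    apply Filter.Tendsto.congr' _ tendsto_const_nhds (f₁ := fun _ => (0:ℂ))
    filter_upwards [hmem] with x hx
    simp only [Set.mem_compl_iff, Set.mem_setOf_eq] at hx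
    simp [hx]

lemma ind_apply (N : ℕ) (p : ZMod 2) (x : Xset) :
    ind N p x = if nx x ≤ 2*N ∧ (nx x : ZMod 2) = p then 1 else 0 := rfl

lemma ind_star_mul (N : ℕ) (p : ZMod 2) : ind N p = star (ind N p) * (ind N p) := by
  ext x
  simp only [ZeroAtInftyContinuousMap.coe_mul, ZeroAtInftyContinuousMap.coe_star, Pi.mul_apply,
    Pi.star_apply, ind_apply]
  split <;> simp

lemma ind_norm_le (N : ℕ) (p : ZMod 2) : ‖ind N p‖ ≤ 1 := by
  rw [← ZeroAtInftyContinuousMap.norm_toBCF_eq_norm]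
  refine (BoundedContinuousFunction.norm_le zero_le_one).2 fun x => ?_
  show ‖ind N p x‖ ≤ 1
  rw [ind_apply]
  split <;> simp

lemma ind_orth (N : ℕ) (p q : ZMod 2) (h : p ≠ q) : ind N p * ind N q = 0 := by
  ext x
  simp only [ZeroAtInftyContinuousMap.coe_mul, Pi.mul_apply, ind_apply,
    ZeroAtInftyContinuousMap.coe_zero, Pi.zero_apply]
  split
  · split
    · exact absurd (by rename_i h1 h2; exact h1.2.symm.trans h2.2) h
    · simp
  · simp

lemma nx_val (x : Xset) (m : ℕ) (hm : 0 < m) (h : (x:ℝ) = 1/(m:ℝ)) : nx x = m := by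
  have h1 := nx_spec x
  have h2 := nx_pos x
  rw [h] at h1
  have hm' : (0:ℝ) < m := by exact_mod_cast hm
  have hn' : (0:ℝ) < (nx x : ℝ) := by exact_mod_cast h2
  field_simp at h1
  exact_mod_cast h1

lemma nx_phi (φ : Xset → Xset)
    (hφval : ∀ n : ℕ, 1 ≤ n →
      ∀ (h1 : (1 : ℝ) / (2 * (n : ℝ) - 1) ∈ Xset) (h2 : (1 : ℝ) / (2 * (n : ℝ)) ∈ Xset),
        φ ⟨1 / (2 * (n : ℝ) - 1), h1⟩ = ⟨1 / (2 * (n : ℝ)), h2⟩ ∧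
        φ ⟨1 / (2 * (n : ℝ)), h2⟩ = ⟨1 / (2 * (n : ℝ) - 1), h1⟩)
    (x : Xset) :
    (nx x % 2 = 1 ∧ nx (φ x) = nx x + 1) ∨ (nx x % 2 = 0 ∧ nx (φ x) = nx x - 1) := by
  have hx := nx_spec x
  have hxp := nx_pos x
  rcases Nat.even_or_odd (nx x) with he | ho
  · -- even: nx x = 2K
    right
    obtain ⟨K, hK⟩ := he
    have hK1 : 1 ≤ K := by omega
    have hcast : (2 : ℝ) * (K : ℝ) = ((nx x : ℕ) : ℝ) := by
      rw [hK]; push_cast; ring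
    have hcast1 : (2 : ℝ) * (K : ℝ) - 1 = (((2*K - 1 : ℕ)) : ℝ) := by
      have : (2*K - 1 : ℕ) = 2*K - 1 := rfl
      push_cast [Nat.cast_sub (by omega : 1 ≤ 2*K)]
      ring
    have h1 : (1 : ℝ) / (2 * (K : ℝ) - 1) ∈ Xset := by
      rw [hcast1]; exact mem_Xset _ (by omega)
    have h2 : (1 : ℝ) / (2 * (K : ℝ)) ∈ Xset := by
      rw [hcast]; exact mem_Xset _ (by omega)
    have hxeq : x = ⟨1 / (2 * (K : ℝ)), h2⟩ := by
      apply Subtype.ext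
      rw [hx, ← hcast]
    have hphi := (hφval K hK1 h1 h2).2
    rw [← hxeq] at hphi
    constructor
    · omega
    · rw [hphi]
      have : nx (⟨1 / (2 * (K : ℝ) - 1), h1⟩ : Xset) = 2*K - 1 := by
        apply nx_val _ _ (by omega)
        show (1 : ℝ) / (2 * (K : ℝ) - 1) = _
        rw [hcast1]
      rw [this, hK]
      omega
  · -- odd: nx x = 2K-1 with K = k+1
    left
    obtain ⟨k, hk⟩ := ho
    set K := k + 1 with hKdef
    have hK1 : 1 ≤ K := by omega
    have hnx : nx x = 2*K - 1 := by omega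
    have hcast : (2 : ℝ) * (K : ℝ) = (((2*K : ℕ)) : ℝ) := by push_cast; ring
    have hcast1 : (2 : ℝ) * (K : ℝ) - 1 = ((nx x : ℕ) : ℝ) := by
      rw [hnx]
      push_cast [Nat.cast_sub (by omega : 1 ≤ 2*K)]
      ring
    have h1 : (1 : ℝ) / (2 * (K : ℝ) - 1) ∈ Xset := by
      rw [hcast1]; exact mem_Xset _ (by omega)
    have h2 : (1 : ℝ) / (2 * (K : ℝ)) ∈ Xset := by
      rw [hcast]; exact mem_Xset _ (by omega)
    have hxeq : x = ⟨1 / (2 * (K : ℝ) - 1), h1⟩ := by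
      apply Subtype.ext
      rw [hx, ← hcast1]
    have hphi := (hφval K hK1 h1 h2).1
    rw [← hxeq] at hphi
    constructor
    · omega
    · rw [hphi]
      have : nx (⟨1 / (2 * (K : ℝ)), h2⟩ : Xset) = 2*K := by
        apply nx_val _ _ (by omega)
        show (1 : ℝ) / (2 * (K : ℝ)) = _
        rw [hcast]
      rw [this, hnx]
      omega

lemma zmod2_add_one_iff : ∀ a b : ZMod 2, a + 1 = b ↔ a = b + 1 := by decide
lemma zmod2_sub_one_iff : ∀ a b : ZMod 2, a - 1 = b ↔ a = b + 1 := by decide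

lemma ind_swap (φ : Xset → Xset)
    (hφval : ∀ n : ℕ, 1 ≤ n →
      ∀ (h1 : (1 : ℝ) / (2 * (n : ℝ) - 1) ∈ Xset) (h2 : (1 : ℝ) / (2 * (n : ℝ)) ∈ Xset),
        φ ⟨1 / (2 * (n : ℝ) - 1), h1⟩ = ⟨1 / (2 * (n : ℝ)), h2⟩ ∧
        φ ⟨1 / (2 * (n : ℝ)), h2⟩ = ⟨1 / (2 * (n : ℝ) - 1), h1⟩)
    (N : ℕ) (p : ZMod 2) (x : Xset) :
    ind N p (φ x) = ind N (p + 1) x := by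
  have hxp := nx_pos x
  rcases nx_phi φ hφval x with ⟨hpar, hval⟩ | ⟨hpar, hval⟩
  · -- nx x odd, nx (φ x) = nx x + 1
    rw [ind_apply, ind_apply, hval]
    apply if_congr _ rfl rfl
    constructor
    · rintro ⟨hle, hp⟩
      refine ⟨by omega, ?_⟩
      rw [← (zmod2_add_one_iff _ _).1 (by push_cast at hp ⊢; exact hp)]
    · rintro ⟨hle, hp⟩
      refine ⟨by omega, ?_⟩
      push_cast
      exact (zmod2_add_one_iff _ _).2 hp
  · -- nx x even (and ≥ 2), nx (φ x) = nx x - 1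
    have h2 : 2 ≤ nx x := by omega
    rw [ind_apply, ind_apply, hval]
    apply if_congr _ rfl rfl
    have hc : ((nx x - 1 : ℕ) : ZMod 2) = (nx x : ZMod 2) - 1 := by
      push_cast [Nat.cast_sub (by omega : 1 ≤ nx x)]
      ring
    constructor
    · rintro ⟨hle, hp⟩
      refine ⟨by omega, ?_⟩
      rw [hc] at hp
      exact (zmod2_sub_one_iff _ _).1 hp
    · rintro ⟨hle, hp⟩
      refine ⟨by omega, ?_⟩
      rw [hc]
      exact (zmod2_sub_one_iff _ _).2 hp

lemma ind_sum_one (N : ℕ) (x : Xset) (hx : nx x ≤ 2*N) :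
    ind N 0 x + ind N 1 x = 1 := by
  rw [ind_apply, ind_apply]
  rcases Nat.even_or_odd (nx x) with he | ho
  · have h0 : ((nx x : ℕ) : ZMod 2) = 0 := by
      obtain ⟨k, hk⟩ := he
      rw [hk]; push_cast
      have h2 : ((2:ZMod 2)) = 0 := rfl
      calc (k : ZMod 2) + k = 2 * k := by ring
        _ = 0 := by rw [h2]; ring
    rw [if_pos ⟨hx, h0⟩, if_neg (by simp [h0])]
    simp
  · have h1 : ((nx x : ℕ) : ZMod 2) = 1 := by
      obtain ⟨k, hk⟩ := ho
      rw [hk]; push_cast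
      have h2 : ((2:ZMod 2)) = 0 := rfl
      calc (2 : ZMod 2) * k + 1 = 2 * k + 1 := by ring
        _ = 1 := by rw [h2]; ring
    rw [if_neg (by simp [h1]), if_pos ⟨hx, h1⟩]
    simp


/-- The `ℤ/2ℤ`-action on `C₀(X)` induced by the homeomorphism of
`X = {1/n : n ≥ 1}` swapping `1/(2n-1)` and `1/(2n)` has the Rokhlin property. -/
theorem stmt4 (φ : Xset → Xset)
    (hφval : ∀ n : ℕ, 1 ≤ n →
      ∀ (h1 : (1 : ℝ) / (2 * (n : ℝ) - 1) ∈ Xset) (h2 : (1 : ℝ) / (2 * (n : ℝ)) ∈ Xset),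
        φ ⟨1 / (2 * (n : ℝ) - 1), h1⟩ = ⟨1 / (2 * (n : ℝ)), h2⟩ ∧
        φ ⟨1 / (2 * (n : ℝ)), h2⟩ = ⟨1 / (2 * (n : ℝ) - 1), h1⟩)
    (α : Multiplicative (ZMod 2) → (C₀(Xset, ℂ) ≃⋆ₐ[ℂ] C₀(Xset, ℂ)))
    (hα : ∀ g h f, α (g * h) f = α g (α h f))
    (hαval : ∀ (f : C₀(Xset, ℂ)) (x : Xset),
      α (Multiplicative.ofAdd (1 : ZMod 2)) f x = f (φ x)) :
    RokhlinProperty α := by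
  intro ε hε F
  -- α at the identity is the identity
  have hone : ∀ f : C₀(Xset, ℂ), α 1 f = f := by
    intro f
    have h := hα 1 1 f
    rw [one_mul] at h
    exact ((α 1).injective h).symm
  -- choose N large enough for F
  have hev : ∀ᶠ x in Filter.cocompact Xset, ∀ a ∈ F, ‖a x‖ < ε/2 := by
    rw [Filter.eventually_all_finset]
    intro a _
    have ht := zero_at_infty a
    have := Metric.tendsto_nhds.mp ht (ε/2) (by linarith)
    filter_upwards [this] with x hx
    simpa [dist_eq_norm] using hx
  obtain ⟨K, hKc, hKs⟩ := Filter.mem_cocompact.mp hev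
  have hKfin : K.Finite := hKc.finite_of_discrete
  obtain ⟨M, hM⟩ := (hKfin.image nx).bddAbove
  set N := M with hN
  set r : Multiplicative (ZMod 2) → C₀(Xset, ℂ) :=
    fun g => ind N (Multiplicative.toAdd g) with hr
  -- the swap property
  have hswap : ∀ p : ZMod 2,
      α (Multiplicative.ofAdd (1 : ZMod 2)) (ind N p) = ind N (1 + p) := by
    intro p
    ext x
    rw [hαval, ind_swap φ hφval, add_comm]
  have hexact : ∀ g h, α g (r h) = r (g * h) := by
    intro g h
    rcases (by decide : ∀ g : Multiplicative (ZMod 2),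
        g = 1 ∨ g = Multiplicative.ofAdd 1) g with hg | hg
    · rw [hg, hone, one_mul]
    · rw [hg, hr]
      simp only
      rw [hswap]
      congr 1
  refine ⟨r, ?_, ?_, ?_, ?_, ?_, ?_⟩
  · exact fun g => ⟨r g, ind_star_mul N _⟩
  · exact fun g => ind_norm_le N _
  · intro g h hgh
    exact ind_orth N _ _ (fun he => hgh (Multiplicative.toAdd.injective he))
  · intro g h
    rw [hexact, sub_self, norm_zero]
    exact hε
  · intro a _ g
    rw [mul_comm, sub_self, norm_zero]
    exact hε
  · intro a ha
    have hsum : (∑ g, r g) = ind N 0 + ind N 1 := by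
      rw [hr]
      rw [Fintype.sum_equiv (Multiplicative.toAdd) _ (fun c => ind N c) (fun g => rfl)]
      exact Fin.sum_univ_two _
    rw [hsum]
    have hle : ‖(ind N 0 + ind N 1) * a - a‖ ≤ ε/2 := by
      rw [← ZeroAtInftyContinuousMap.norm_toBCF_eq_norm]
      refine (BoundedContinuousFunction.norm_le (by linarith)).2 fun x => ?_
      show ‖((ind N 0 + ind N 1) * a - a) x‖ ≤ ε/2
      simp only [ZeroAtInftyContinuousMap.coe_sub, ZeroAtInftyContinuousMap.coe_mul,
        ZeroAtInftyContinuousMap.coe_add, Pi.sub_apply, Pi.mul_apply, Pi.add_apply]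
      by_cases hx : nx x ≤ 2*N
      · rw [ind_sum_one N x hx, one_mul, sub_self, norm_zero]
        linarith
      · have h0 : ind N (0 : ZMod 2) x = 0 := by
          rw [ind_apply, if_neg (fun hc => hx hc.1)]
        have h1 : ind N (1 : ZMod 2) x = 0 := by
          rw [ind_apply, if_neg (fun hc => hx hc.1)]
        rw [h0, h1, add_zero, zero_mul, zero_sub, norm_neg]
        have hxK : x ∉ K := by
          intro hxK
          exact hx (le_trans (hM ⟨x, hxK, rfl⟩) (by omega))
        exact le_of_lt (hKs hxK a ha)
    linarith
end

section
/- Let A be a C*-algebra, let G be a finite group, and let α : G → Aut(A) be an action of G on A with the Rokhlin property. Let H be a subgroup of G. Then the restriction of α to H (the action h ↦ α_h of H on A) has the Rokhlin property. -/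
/-- Casting a finite sum of `star u * u` terms into the unitization. -/
lemma aux_inr_sum_star_mul {A : Type*} [NonUnitalCStarAlgebra A] {ι : Type*}
    (s : Finset ι) (u : ι → A) :
    ((∑ i ∈ s, star (u i) * u i : A) : Unitization ℂ A) =
      ∑ i ∈ s, star ((u i : Unitization ℂ A)) * ((u i : Unitization ℂ A)) := by
  calc ((∑ i ∈ s, star (u i) * u i : A) : Unitization ℂ A)
      = Unitization.inrNonUnitalStarAlgHom ℂ A (∑ i ∈ s, star (u i) * u i) := rfl
    _ = ∑ i ∈ s, Unitization.inrNonUnitalStarAlgHom ℂ A (star (u i) * u i) :=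
        map_sum _ _ s
    _ = ∑ i ∈ s, star ((u i : Unitization ℂ A)) * ((u i : Unitization ℂ A)) := by
        refine Finset.sum_congr rfl fun i _ => ?_
        show ((star (u i) * u i : A) : Unitization ℂ A) = _
        rw [Unitization.inr_mul, Unitization.inr_star]

/-- A finite sum of elements of the form `star u * u` is itself of the form `star t * t`. -/
lemma aux_exists_star_mul_self {A : Type*} [NonUnitalCStarAlgebra A] {ι : Type*}
    (s : Finset ι) (u : ι → A) :
    ∃ t : A, ∑ i ∈ s, star (u i) * u i = star t * t := by
  classical
  set x := ∑ i ∈ s, star (u i) * u i with hx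
  have hxsa : IsSelfAdjoint x := by
    rw [IsSelfAdjoint, hx, star_sum]
    exact Finset.sum_congr rfl fun i _ => (IsSelfAdjoint.star_mul_self (u i)).star_eq
  have hq : ∀ c ∈ quasispectrum ℝ x, 0 ≤ c := by
    rw [Unitization.quasispectrum_eq_spectrum_inr' ℝ ℂ x]
    have h0 : (0 : Unitization ℂ A) ≤ (x : Unitization ℂ A) := by
      rw [hx, aux_inr_sum_star_mul]
      exact Finset.sum_nonneg fun i _ => star_mul_self_nonneg _
    exact fun c hc => spectrum_nonneg_of_nonneg h0 hc
  refine ⟨cfcₙ Real.sqrt x, ?_⟩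
  have h1 : IsSelfAdjoint (cfcₙ Real.sqrt x) := cfcₙ_predicate Real.sqrt x
  rw [h1.star_eq, ← cfcₙ_mul Real.sqrt Real.sqrt x]
  conv_lhs => rw [← cfcₙ_id ℝ x]
  exact cfcₙ_congr fun c hc => (Real.mul_self_sqrt (hq c hc)).symm

/-- For a selfadjoint element of a C*-ring, `‖x ^ 2 ^ k‖ = ‖x‖ ^ 2 ^ k`. -/
lemma aux_norm_pow_two_pow {B : Type*} [NormedRing B] [StarRing B] [CStarRing B] {x : B}
    (hx : IsSelfAdjoint x) : ∀ k : ℕ, ‖x ^ 2 ^ k‖ = ‖x‖ ^ 2 ^ k := by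
  intro k
  induction k with
  | zero => simp
  | succ k ih =>
    have h2 : x ^ 2 ^ (k + 1) = x ^ 2 ^ k * x ^ 2 ^ k := by
      rw [← pow_add]; ring_nf
    rw [h2]
    have hsa : IsSelfAdjoint (x ^ 2 ^ k) := hx.pow _
    calc ‖x ^ 2 ^ k * x ^ 2 ^ k‖ = ‖star (x ^ 2 ^ k) * x ^ 2 ^ k‖ := by rw [hsa.star_eq]
      _ = ‖x ^ 2 ^ k‖ * ‖x ^ 2 ^ k‖ := CStarRing.norm_star_mul_self
      _ = ‖x‖ ^ 2 ^ k * ‖x‖ ^ 2 ^ k := by rw [ih]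
      _ = ‖x‖ ^ 2 ^ (k + 1) := by rw [← pow_add]; ring_nf

/-- The norm of a finite sum of pairwise orthogonal selfadjoint contractions in a C*-ring
is at most 1. -/
lemma aux_norm_sum_le_one' {B : Type*} [NormedRing B] [StarRing B] [CStarRing B] {ι : Type*}
    [Fintype ι] (p : ι → B) (hsa : ∀ i, IsSelfAdjoint (p i)) (h1 : ∀ i, ‖p i‖ ≤ 1)
    (horth : ∀ i j, i ≠ j → p i * p j = 0) : ‖∑ i, p i‖ ≤ 1 := by
  classical
  have horthpow : ∀ (m : ℕ), 0 < m → ∀ i j, i ≠ j → p i ^ m * p j ^ m = 0 := by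
    intro m hm i j hij
    obtain ⟨m, rfl⟩ := Nat.exists_eq_succ_of_ne_zero hm.ne'
    calc p i ^ (m + 1) * p j ^ (m + 1) = p i ^ m * ((p i * p j) * p j ^ m) := by
          rw [pow_succ, pow_succ']; noncomm_ring
      _ = 0 := by rw [horth i j hij]; simp
  have sum_sq : ∀ (q : ι → B), (∀ i j, i ≠ j → q i * q j = 0) →
      (∑ i, q i) * (∑ i, q i) = ∑ i, q i * q i := by
    intro q hq
    rw [Finset.sum_mul_sum]
    refine Finset.sum_congr rfl fun i _ => ?_
    rw [Finset.sum_eq_single i (fun j _ hji => hq i j (Ne.symm hji)) (by simp)]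
  have hpowsum : ∀ k : ℕ, (∑ i, p i) ^ 2 ^ k = ∑ i, p i ^ 2 ^ k := by
    intro k
    induction k with
    | zero => simp
    | succ k ih =>
      have h2 : ∀ y : B, y ^ 2 ^ (k + 1) = y ^ 2 ^ k * y ^ 2 ^ k := fun y => by
        rw [← pow_add]; ring_nf
      rw [h2, ih, sum_sq _ (horthpow (2 ^ k) (by positivity))]
      exact Finset.sum_congr rfl fun i _ => (h2 (p i)).symm
  have hxsa : IsSelfAdjoint (∑ i, p i) := by
    rw [IsSelfAdjoint, star_sum]
    exact Finset.sum_congr rfl fun i _ => (hsa i).star_eq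
  have hbound : ∀ k : ℕ, ‖∑ i, p i‖ ^ 2 ^ k ≤ (Fintype.card ι : ℝ) := by
    intro k
    calc ‖∑ i, p i‖ ^ 2 ^ k = ‖(∑ i, p i) ^ 2 ^ k‖ := (aux_norm_pow_two_pow hxsa k).symm
      _ = ‖∑ i, p i ^ 2 ^ k‖ := by rw [hpowsum]
      _ ≤ ∑ i, ‖p i ^ 2 ^ k‖ := norm_sum_le _ _
      _ ≤ ∑ _i : ι, (1 : ℝ) := by
          refine Finset.sum_le_sum fun i _ => ?_
          rw [aux_norm_pow_two_pow (hsa i)]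
          exact pow_le_one₀ (norm_nonneg _) (h1 i)
      _ = (Fintype.card ι : ℝ) := by simp
  by_contra hlt
  push_neg at hlt
  obtain ⟨k, hk⟩ := pow_unbounded_of_one_lt (Fintype.card ι : ℝ) hlt
  have h2 : ‖∑ i, p i‖ ^ k ≤ ‖∑ i, p i‖ ^ 2 ^ k :=
    pow_le_pow_right₀ hlt.le (Nat.lt_two_pow_self (n := k)).le
  linarith [hbound k]

/-- Nonunital version of `aux_norm_sum_le_one'`, via the unitization. -/
lemma aux_norm_sum_le_one {A : Type*} [NonUnitalCStarAlgebra A] {ι : Type*} [Fintype ι]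
    (p : ι → A) (hsa : ∀ i, IsSelfAdjoint (p i)) (h1 : ∀ i, ‖p i‖ ≤ 1)
    (horth : ∀ i j, i ≠ j → p i * p j = 0) : ‖∑ i, p i‖ ≤ 1 := by
  have key := aux_norm_sum_le_one' (fun i => ((p i : Unitization ℂ A)))
    (fun i => (hsa i).inr ℂ)
    (fun i => by rw [Unitization.norm_inr]; exact h1 i)
    (fun i j hij => by rw [← Unitization.inr_mul, horth i j hij, Unitization.inr_zero])
  have hcast : ((∑ i, p i : A) : Unitization ℂ A) = ∑ i, ((p i : Unitization ℂ A)) :=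
    map_sum (Unitization.inrNonUnitalStarAlgHom ℂ A) p Finset.univ
  rw [← Unitization.norm_inr (𝕜 := ℂ) (∑ i, p i), hcast]
  exact key

/-- If an action of a finite group `G` on a C*-algebra has the Rokhlin property,
then its restriction to any subgroup `H ≤ G` has the Rokhlin property. -/
theorem stmt6 {G A : Type*} [Group G] [Fintype G] [NonUnitalCStarAlgebra A]
    (α : G → (A ≃⋆ₐ[ℂ] A)) (hα : ∀ g h a, α (g * h) a = α g (α h a))
    (hRokhlin : RokhlinProperty α)
    (H : Subgroup G) [Fintype H] :
    RokhlinProperty (fun h : H => α (h : G)) := by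
  classical
  intro ε hε F
  set Q := Quotient (QuotientGroup.rightRel H) with hQ
  haveI : Fintype Q := Quotient.fintype _
  -- the bijection `H × Q ≃ G`, `(h, q) ↦ h * q.out`
  have key : ∀ g : G, g * ((Quotient.mk (QuotientGroup.rightRel H) g).out)⁻¹ ∈ H := by
    intro g
    have h := Quotient.exact (Quotient.out_eq (Quotient.mk (QuotientGroup.rightRel H) g))
    exact (QuotientGroup.rightRel_apply).mp h
  have mkq : ∀ (h : H) (q : Q), Quotient.mk (QuotientGroup.rightRel H) ((h : G) * q.out) = q := by
    intro h q
    conv_rhs => rw [← Quotient.out_eq q]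
    refine Quotient.sound (QuotientGroup.rightRel_apply.mpr ?_)
    have : q.out * ((h : G) * q.out)⁻¹ = (h : G)⁻¹ := by group
    rw [this]
    exact H.inv_mem h.2
  let e : H × Q ≃ G :=
    { toFun := fun x => (x.1 : G) * x.2.out
      invFun := fun g => (⟨g * ((Quotient.mk (QuotientGroup.rightRel H) g).out)⁻¹, key g⟩,
        Quotient.mk (QuotientGroup.rightRel H) g)
      left_inv := by
        rintro ⟨h, q⟩
        have h1 := mkq h q
        refine Prod.ext (Subtype.ext ?_) h1
        show ((h : G) * q.out) * ((Quotient.mk (QuotientGroup.rightRel H)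
          ((h : G) * q.out)).out)⁻¹ = (h : G)
        rw [h1]
        group
      right_inv := fun g => by simp }
  set N := Fintype.card Q with hN
  obtain ⟨r, hpos, hnorm, horth, hequiv, hcomm, hsum⟩ :=
    hRokhlin (ε / ((N : ℝ) + 1)) (by positivity) F
  choose u hu using hpos
  refine ⟨fun h => ∑ q : Q, r ((h : G) * q.out), ?_, ?_, ?_, ?_, ?_, ?_⟩
  · -- positivity
    intro h
    obtain ⟨t, ht⟩ := aux_exists_star_mul_self (Finset.univ : Finset Q)
      (fun q => u ((h : G) * q.out))
    refine ⟨t, ?_⟩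
    rw [← ht]
    exact Finset.sum_congr rfl fun q _ => hu _
  · -- norm bound
    intro h
    refine aux_norm_sum_le_one _ (fun q => ?_) (fun q => hnorm _) (fun q q' hqq' => ?_)
    · rw [hu]
      exact IsSelfAdjoint.star_mul_self _
    · refine horth _ _ fun hc => hqq' ?_
      have := e.injective (a₁ := (h, q)) (a₂ := (h, q')) hc
      exact (Prod.mk.injEq _ _ _ _ ▸ this).2
  · -- orthogonality
    intro h h' hne
    rw [Finset.sum_mul_sum]
    refine Finset.sum_eq_zero fun q _ => Finset.sum_eq_zero fun q' _ => ?_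
    refine horth _ _ fun hc => hne ?_
    have := e.injective (a₁ := (h, q)) (a₂ := (h', q')) hc
    exact (Prod.mk.injEq _ _ _ _ ▸ this).1
  · -- approximate equivariance
    intro g h
    simp only
    rw [map_sum, ← Finset.sum_sub_distrib]
    calc ‖∑ q : Q, (α (g : G) (r ((h : G) * q.out)) - r (((g * h : H) : G) * q.out))‖
        ≤ ∑ q : Q, ‖α (g : G) (r ((h : G) * q.out)) - r (((g * h : H) : G) * q.out)‖ :=
          norm_sum_le _ _
      _ ≤ ∑ _q : Q, ε / ((N : ℝ) + 1) := by
          refine Finset.sum_le_sum fun q _ => le_of_lt ?_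
          have := hequiv (g : G) ((h : G) * q.out)
          simpa [mul_assoc] using this
      _ = (N : ℝ) * (ε / ((N : ℝ) + 1)) := by
          rw [Finset.sum_const, Finset.card_univ, nsmul_eq_mul, hN]
      _ < ((N : ℝ) + 1) * (ε / ((N : ℝ) + 1)) :=
          mul_lt_mul_of_pos_right (lt_add_one _) (by positivity)
      _ = ε := by field_simp
  · -- approximate commutation
    intro a ha h
    rw [Finset.sum_mul, Finset.mul_sum, ← Finset.sum_sub_distrib]
    calc ‖∑ q : Q, (r ((h : G) * q.out) * a - a * r ((h : G) * q.out))‖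
        ≤ ∑ q : Q, ‖r ((h : G) * q.out) * a - a * r ((h : G) * q.out)‖ := norm_sum_le _ _
      _ ≤ ∑ _q : Q, ε / ((N : ℝ) + 1) :=
          Finset.sum_le_sum fun q _ => le_of_lt (hcomm a ha _)
      _ = (N : ℝ) * (ε / ((N : ℝ) + 1)) := by
          rw [Finset.sum_const, Finset.card_univ, nsmul_eq_mul, hN]
      _ < ((N : ℝ) + 1) * (ε / ((N : ℝ) + 1)) :=
          mul_lt_mul_of_pos_right (lt_add_one _) (by positivity)
      _ = ε := by field_simp
  · -- approximate unit
    intro a ha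
    have hsum_eq : (∑ h : H, ∑ q : Q, r ((h : G) * q.out)) = ∑ g : G, r g := by
      rw [← Equiv.sum_comp e r, Fintype.sum_prod_type]
      rfl
    rw [hsum_eq]
    exact lt_of_lt_of_le (hsum a ha) (div_le_self hε.le (le_add_of_nonneg_left (Nat.cast_nonneg N)))
end

section
/- Let A and C be C*-algebras, let G be a finite group, let α : G → Aut(A) and β : G → Aut(C) be actions of G, and let π : A → C be a surjective *-homomorphism that is equivariant, i.e., π ∘ α_g = β_g ∘ π for all g ∈ G. If α has the Rokhlin property, then β has the Rokhlin property. (In particular, the induced action on the quotient of A by a G-invariant closed two-sided ideal has the Rokhlin property.) -/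
/-- The Rokhlin property passes to equivariant surjective images (in particular,
to quotients by invariant ideals). -/
theorem stmt7 {G A C : Type*} [Group G] [Fintype G]
    [NonUnitalCStarAlgebra A] [NonUnitalCStarAlgebra C]
    (α : G → (A ≃⋆ₐ[ℂ] A)) (hα : ∀ g h a, α (g * h) a = α g (α h a))
    (β : G → (C ≃⋆ₐ[ℂ] C)) (hβ : ∀ g h c, β (g * h) c = β g (β h c))
    (π : A →⋆ₙₐ[ℂ] C) (hsurj : Function.Surjective π)
    (hequiv : ∀ (g : G) (a : A), π (α g a) = β g (π a))
    (hRokhlin : RokhlinProperty α) :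
    RokhlinProperty β := by
  classical
  intro ε hε F
  -- choose preimages of elements of F
  choose lift hlift using hsurj
  obtain ⟨r, hpos, hnorm, horth, hact, hcomm, hsum⟩ :=
    hRokhlin ε hε (F.image lift)
  refine ⟨fun g => π (r g), ?_, ?_, ?_, ?_, ?_, ?_⟩
  · intro g
    obtain ⟨s, hs⟩ := hpos g
    exact ⟨π s, show π (r g) = _ by rw [hs, map_mul, map_star]⟩
  · intro g
    exact (NonUnitalStarAlgHom.norm_apply_le π (r g)).trans (hnorm g)
  · intro g h hgh
    rw [← map_mul, horth g h hgh, map_zero]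
  · intro g h
    calc ‖β g (π (r h)) - π (r (g * h))‖
        = ‖π (α g (r h) - r (g * h))‖ := by rw [map_sub, hequiv]
      _ ≤ ‖α g (r h) - r (g * h)‖ := NonUnitalStarAlgHom.norm_apply_le π _
      _ < ε := hact g h
  · intro a ha g
    have h1 : π (r g * lift a - lift a * r g) = π (r g) * a - a * π (r g) := by
      rw [map_sub, map_mul, map_mul, hlift]
    calc ‖π (r g) * a - a * π (r g)‖
        = ‖π (r g * lift a - lift a * r g)‖ := by rw [h1]
      _ ≤ ‖r g * lift a - lift a * r g‖ := NonUnitalStarAlgHom.norm_apply_le π _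
      _ < ε := hcomm (lift a) (Finset.mem_image_of_mem lift ha) g
  · intro a ha
    have h1 : π ((∑ g, r g) * lift a - lift a) = (∑ g, π (r g)) * a - a := by
      rw [map_sub, map_mul, map_sum, hlift]
    calc ‖(∑ g, π (r g)) * a - a‖
        = ‖π ((∑ g, r g) * lift a - lift a)‖ := by rw [h1]
      _ ≤ ‖(∑ g, r g) * lift a - lift a‖ := NonUnitalStarAlgHom.norm_apply_le π _
      _ < ε := hsum (lift a) (Finset.mem_image_of_mem lift ha)
end

section
/- Let A be a C*-algebra, let G be a finite group, and let α : G → Aut(A) be an action of G on A. Suppose that for every finite subset F ⊆ A and every ε > 0 there exist a C*-algebra B, an action β : G → Aut(B) with the Rokhlin property, and a *-homomorphism φ : B → A which is equivariant (φ ∘ β_g = α_g ∘ φ for all g ∈ G) such that dist(a, φ(B)) < ε for all a ∈ F. Then α has the Rokhlin property. -/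
universe u

/-- If an action `α` of a finite group `G` on a C*-algebra `A` can be locally
approximated by equivariant images of actions with the Rokhlin property, then `α`
has the Rokhlin property. -/
theorem stmt8 {G : Type*} {A : Type u} [Group G] [Fintype G] [NonUnitalCStarAlgebra A]
    (α : G → (A ≃⋆ₐ[ℂ] A)) (hα : ∀ g h a, α (g * h) a = α g (α h a))
    (happrox : ∀ (F : Finset A) (ε : ℝ), 0 < ε →
      ∃ (B : Type u) (_ : NonUnitalCStarAlgebra B) (β : G → (B ≃⋆ₐ[ℂ] B))
        (φ : B →⋆ₙₐ[ℂ] A),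
        (∀ g h b, β (g * h) b = β g (β h b)) ∧
        RokhlinProperty β ∧
        (∀ (g : G) (b : B), φ (β g b) = α g (φ b)) ∧
        (∀ a ∈ F, Metric.infDist a (Set.range φ) < ε)) :
    RokhlinProperty α := by
  classical
  intro ε hε F
  set n : ℝ := (Fintype.card G : ℝ) with hn
  have hn0 : (0 : ℝ) ≤ n := by positivity
  set δ : ℝ := ε / (3 * (n + 1)) with hδdef
  have hδ : 0 < δ := by positivity
  obtain ⟨B, _, β, φ, hβmul, hβRok, hequiv, hdist⟩ := happrox F δ hδ
  -- choose approximants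
  have hchoice : ∀ a ∈ F, ∃ b : B, ‖a - φ b‖ < δ := by
    intro a ha
    have hne : (Set.range φ).Nonempty := ⟨φ 0, Set.mem_range_self 0⟩
    obtain ⟨y, hy, hylt⟩ := (Metric.infDist_lt_iff hne).mp (hdist a ha)
    obtain ⟨b, rfl⟩ := hy
    exact ⟨b, by simpa [dist_eq_norm] using hylt⟩
  choose! b hb using hchoice
  have hε3 : (0 : ℝ) < ε / 3 := by positivity
  obtain ⟨r', hr'pos, hr'norm, hr'orth, hr'eq, hr'comm, hr'sum⟩ :=
    hβRok (ε / 3) hε3 (F.image b)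
  refine ⟨fun g => φ (r' g), ?_, ?_, ?_, ?_, ?_, ?_⟩
  · intro g
    obtain ⟨s, hs⟩ := hr'pos g
    exact ⟨φ s, by show φ (r' g) = _; rw [hs, map_mul, map_star]⟩
  · intro g
    exact (NonUnitalStarAlgHom.norm_apply_le φ (r' g)).trans (hr'norm g)
  · intro g h hgh
    rw [← map_mul, hr'orth g h hgh, map_zero]
  · intro g h
    have := hr'eq g h
    calc ‖α g (φ (r' h)) - φ (r' (g * h))‖
        = ‖φ (β g (r' h) - r' (g * h))‖ := by rw [map_sub, hequiv]
      _ ≤ ‖β g (r' h) - r' (g * h)‖ := NonUnitalStarAlgHom.norm_apply_le φ _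
      _ < ε / 3 := this
      _ < ε := by linarith
  · intro a ha g
    have hba := hr'comm (b a) (Finset.mem_image_of_mem b ha) g
    have h1 : ‖φ (r' g) * a - a * φ (r' g)‖
        ≤ ‖φ (r' g) * (a - φ (b a))‖ + ‖φ (r' g * b a - b a * r' g)‖
          + ‖(φ (b a) - a) * φ (r' g)‖ := by
      have : φ (r' g) * a - a * φ (r' g)
          = φ (r' g) * (a - φ (b a)) + φ (r' g * b a - b a * r' g)
            + (φ (b a) - a) * φ (r' g) := by
        simp only [map_sub, map_mul]
        noncomm_ring
      rw [this]
      exact (norm_add_le _ _).trans (by gcongr; exact norm_add_le _ _)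
    have h2 : ‖φ (r' g) * (a - φ (b a))‖ ≤ 1 * ‖a - φ (b a)‖ := by
      calc ‖φ (r' g) * (a - φ (b a))‖ ≤ ‖φ (r' g)‖ * ‖a - φ (b a)‖ := norm_mul_le _ _
        _ ≤ 1 * ‖a - φ (b a)‖ := by
            gcongr
            exact (NonUnitalStarAlgHom.norm_apply_le φ _).trans (hr'norm g)
    have h3 : ‖(φ (b a) - a) * φ (r' g)‖ ≤ ‖a - φ (b a)‖ * 1 := by
      calc ‖(φ (b a) - a) * φ (r' g)‖ ≤ ‖φ (b a) - a‖ * ‖φ (r' g)‖ := norm_mul_le _ _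
        _ ≤ ‖a - φ (b a)‖ * 1 := by
            rw [norm_sub_rev]
            gcongr
            exact (NonUnitalStarAlgHom.norm_apply_le φ _).trans (hr'norm g)
    have h4 : ‖φ (r' g * b a - b a * r' g)‖ < ε / 3 :=
      lt_of_le_of_lt (NonUnitalStarAlgHom.norm_apply_le φ _) hba
    have h5 : ‖a - φ (b a)‖ < δ := hb a ha
    have hδle : δ ≤ ε / 3 := by
      rw [hδdef, div_le_div_iff₀ (by positivity) (by norm_num)]
      nlinarith
    calc ‖φ (r' g) * a - a * φ (r' g)‖
        ≤ 1 * ‖a - φ (b a)‖ + ‖φ (r' g * b a - b a * r' g)‖ + ‖a - φ (b a)‖ * 1 :=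
          h1.trans (by gcongr)
      _ < ε := by nlinarith
  · intro a ha
    have hba := hr'sum (b a) (Finset.mem_image_of_mem b ha)
    have hsumnorm : ‖∑ g, φ (r' g)‖ ≤ n := by
      calc ‖∑ g, φ (r' g)‖ ≤ ∑ g, ‖φ (r' g)‖ := norm_sum_le _ _
        _ ≤ ∑ _g : G, (1 : ℝ) := by
            gcongr with g
            exact (NonUnitalStarAlgHom.norm_apply_le φ _).trans (hr'norm g)
        _ = n := by simp [hn]
    have key : (∑ g, φ (r' g)) * a - a
        = (∑ g, φ (r' g)) * (a - φ (b a)) + φ ((∑ g, r' g) * b a - b a)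
          + (φ (b a) - a) := by
      simp only [map_sub, map_mul, map_sum]
      noncomm_ring
    have h5 : ‖a - φ (b a)‖ < δ := hb a ha
    have h4 : ‖φ ((∑ g, r' g) * b a - b a)‖ < ε / 3 :=
      lt_of_le_of_lt (NonUnitalStarAlgHom.norm_apply_le φ _) hba
    have h2 : ‖(∑ g, φ (r' g)) * (a - φ (b a))‖ ≤ n * δ := by
      calc ‖(∑ g, φ (r' g)) * (a - φ (b a))‖ ≤ ‖∑ g, φ (r' g)‖ * ‖a - φ (b a)‖ :=
            norm_mul_le _ _
        _ ≤ n * δ := by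
            apply mul_le_mul hsumnorm h5.le (norm_nonneg _) hn0
    have h3 : ‖φ (b a) - a‖ < δ := by rw [norm_sub_rev]; exact h5
    have hbound : ‖(∑ g, φ (r' g)) * a - a‖
        ≤ ‖(∑ g, φ (r' g)) * (a - φ (b a))‖ + ‖φ ((∑ g, r' g) * b a - b a)‖
          + ‖φ (b a) - a‖ := by
      rw [key]
      exact (norm_add_le _ _).trans (by gcongr; exact norm_add_le _ _)
    have hnd : (n + 1) * δ = ε / 3 := by
      rw [hδdef]; field_simp
    calc ‖(∑ g, φ (r' g)) * a - a‖
        ≤ ‖(∑ g, φ (r' g)) * (a - φ (b a))‖ + ‖φ ((∑ g, r' g) * b a - b a)‖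
          + ‖φ (b a) - a‖ := hbound
      _ < n * δ + ε / 3 + δ := by
          have := h2
          nlinarith [norm_nonneg ((∑ g, φ (r' g)) * (a - φ (b a)))]
      _ ≤ ε := by nlinarith
end

section
/- Let A be a C*-algebra, let G be a finite group, and let α, β : G → Aut(A) be two actions of G on A. Let 𝓜(A) denote the multiplier algebra of A with canonical *-embedding ι : A → 𝓜(A), and for each g ∈ G let ᾱ_g be a *-automorphism of 𝓜(A) with ᾱ_g(ι(a)) = ι(α_g(a)) for all a ∈ A. Suppose α and β are exterior equivalent: there is a map ω : G → 𝓜(A) such that each ω_g is a unitary (ω_g* ω_g = ω_g ω_g* = 1), ω_{gh} = ω_g ᾱ_g(ω_h) for all g, h ∈ G, and ι(β_g(a)) = ω_g ι(α_g(a)) ω_g* for all g ∈ G and a ∈ A. If α has the Rokhlin property, then β has the Rokhlin property. -/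
open scoped MultiplierAlgebra

namespace Stmt10Aux

section Tri
variable {E : Type*} [SeminormedAddCommGroup E]

lemma tri2 (a b c : E) : ‖a - c‖ ≤ ‖a - b‖ + ‖b - c‖ := by
  simpa [dist_eq_norm] using dist_triangle a b c

lemma tri3 (a b c d : E) : ‖a - d‖ ≤ ‖a - b‖ + ‖b - c‖ + ‖c - d‖ := by
  have h1 := tri2 a b d
  have h2 := tri2 b c d
  linarith

lemma tri5 (a b c d e f : E) :
    ‖a - f‖ ≤ ‖a - b‖ + ‖b - c‖ + ‖c - d‖ + ‖d - e‖ + ‖e - f‖ := by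
  have h1 := tri3 a b c d
  have h2 := tri2 d e f
  have h3 := tri2 a d f
  have h4 := tri2 a d d
  have h5 := tri2 d e f
  have h6 := tri3 a b c d
  have h7 := tri2 a d f
  linarith [tri3 a b c d, tri2 d e f, tri2 a d f]

lemma tri6 (a b c d e f g : E) :
    ‖a - g‖ ≤ ‖a - b‖ + ‖b - c‖ + ‖c - d‖ + ‖d - e‖ + ‖e - f‖ + ‖f - g‖ := by
  have h1 := tri5 a b c d e f
  have h2 := tri2 a f g
  linarith

end Tri

section Bnd
variable {M : Type*} [NonUnitalSeminormedRing M]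

lemma norm_mul_le_of_le {x y : M} {c : ℝ} (hx : ‖x‖ ≤ c) (hy : ‖y‖ ≤ 1) : ‖x * y‖ ≤ c := by
  have h := norm_mul_le x y
  nlinarith [norm_nonneg x, norm_nonneg y]

lemma norm_mul_le_of_le' {x y : M} {c : ℝ} (hx : ‖x‖ ≤ 1) (hy : ‖y‖ ≤ c) : ‖x * y‖ ≤ c := by
  have h := norm_mul_le x y
  nlinarith [norm_nonneg x, norm_nonneg y]

end Bnd

section CStar
variable {M : Type*} [NormedRing M] [StarRing M] [CStarRing M]

lemma norm_unitary_mul {w : M} (hw : star w * w = 1) (x : M) : ‖w * x‖ = ‖x‖ := by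
  have h1 : star (w * x) * (w * x) = star x * x := by
    rw [star_mul]
    calc star x * star w * (w * x) = star x * (star w * w) * x := by noncomm_ring
      _ = star x * x := by rw [hw, mul_one]
  have h2 := CStarRing.norm_star_mul_self (x := w * x)
  have h3 := CStarRing.norm_star_mul_self (x := x)
  rw [h1, h3] at h2
  exact ((mul_self_inj (norm_nonneg _) (norm_nonneg _)).mp h2).symm

lemma norm_mul_unitary {w : M} (hw : w * star w = 1) (x : M) : ‖x * w‖ = ‖x‖ := by
  have h1 : (x * w) * star (x * w) = x * star x := by
    rw [star_mul]
    calc x * w * (star w * star x) = x * (w * star w) * star x := by noncomm_ring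
      _ = x * star x := by rw [hw, mul_one]
  have h2 := CStarRing.norm_self_mul_star (x := x * w)
  have h3 := CStarRing.norm_self_mul_star (x := x)
  rw [h1, h3] at h2
  exact ((mul_self_inj (norm_nonneg _) (norm_nonneg _)).mp h2).symm

/-- The key estimate for approximate equivariance of the conjugated tower.
Everything happens inside a unital C*-ring `M` (which will be the multiplier
algebra). -/
lemma cond4_est {W Q a₁ Ee D' φ : M} {δ : ℝ}
    (hW1 : star W * W = 1) (hW2 : W * star W = 1)
    (hQ : ‖Q‖ ≤ 1) (ha₁ : ‖a₁‖ ≤ 1) (hEe : ‖Ee‖ ≤ 1)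
    (hsub : ‖a₁ - Q‖ ≤ δ)
    (hcE : ‖Q * Ee - Ee * Q‖ ≤ δ) (hcφ : ‖Q * φ - φ * Q‖ ≤ δ)
    (hcD : ‖Q * D' - D' * Q‖ ≤ δ)
    (hWE : W * Ee = D' * W) (hDW : D' * W = φ) :
    ‖W * (a₁ * Ee * a₁) * star W - Q * D' * Q‖ ≤ 6 * δ := by
  have hWl : ∀ z : M, ‖W * z‖ = ‖z‖ := fun z => norm_unitary_mul hW1 z
  have hWr : ∀ z : M, ‖z * star W‖ = ‖z‖ := fun z => by
    refine norm_mul_unitary ?_ z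
    rw [star_star]; exact hW1
  have hconj : ∀ z : M, ‖W * z * star W‖ = ‖z‖ := fun z => by
    rw [mul_assoc, hWl, hWr]
  have hφW : φ * star W = D' := by
    rw [← hDW, mul_assoc, hW2, mul_one]
  have t1 : ‖W * (a₁ * Ee * a₁) * star W - W * (Q * Ee * a₁) * star W‖ ≤ δ := by
    have e : W * (a₁ * Ee * a₁) * star W - W * (Q * Ee * a₁) * star W
        = W * ((a₁ - Q) * (Ee * a₁)) * star W := by noncomm_ring
    rw [e, hconj]
    exact norm_mul_le_of_le hsub (norm_mul_le_of_le hEe ha₁)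
  have t2 : ‖W * (Q * Ee * a₁) * star W - W * (Q * Ee * Q) * star W‖ ≤ δ := by
    have e : W * (Q * Ee * a₁) * star W - W * (Q * Ee * Q) * star W
        = W * ((Q * Ee) * (a₁ - Q)) * star W := by noncomm_ring
    rw [e, hconj]
    exact norm_mul_le_of_le' (norm_mul_le_of_le hQ hEe) hsub
  have t3 : ‖W * (Q * Ee * Q) * star W - W * (Ee * Q * Q) * star W‖ ≤ δ := by
    have e : W * (Q * Ee * Q) * star W - W * (Ee * Q * Q) * star W
        = W * ((Q * Ee - Ee * Q) * Q) * star W := by noncomm_ring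
    rw [e, hconj]
    exact norm_mul_le_of_le hcE hQ
  have eφ : W * (Ee * Q * Q) * star W = φ * (Q * Q) * star W := by
    have e1 : W * (Ee * Q * Q) * star W = (W * Ee) * (Q * Q) * star W := by
      noncomm_ring
    rw [e1, hWE, hDW]
  have t4 : ‖φ * (Q * Q) * star W - Q * (φ * Q) * star W‖ ≤ δ := by
    have e : φ * (Q * Q) * star W - Q * (φ * Q) * star W
        = ((φ * Q - Q * φ) * Q) * star W := by noncomm_ring
    rw [e, hWr]
    refine norm_mul_le_of_le ?_ hQ
    rw [norm_sub_rev]; exact hcφ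
  have t5 : ‖Q * (φ * Q) * star W - Q * (Q * φ) * star W‖ ≤ δ := by
    have e : Q * (φ * Q) * star W - Q * (Q * φ) * star W
        = (Q * (φ * Q - Q * φ)) * star W := by noncomm_ring
    rw [e, hWr]
    refine norm_mul_le_of_le' hQ ?_
    rw [norm_sub_rev]; exact hcφ
  have e5 : Q * (Q * φ) * star W = Q * Q * D' := by
    calc Q * (Q * φ) * star W = Q * Q * (φ * star W) := by noncomm_ring
      _ = Q * Q * D' := by rw [hφW]
  have t6 : ‖Q * Q * D' - Q * D' * Q‖ ≤ δ := by
    have e : Q * Q * D' - Q * D' * Q = Q * (Q * D' - D' * Q) := by noncomm_ring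
    rw [e]
    exact norm_mul_le_of_le' hQ hcD
  have chain := tri6 (W * (a₁ * Ee * a₁) * star W) (W * (Q * Ee * a₁) * star W)
    (W * (Q * Ee * Q) * star W) (W * (Ee * Q * Q) * star W)
    (Q * (φ * Q) * star W) (Q * (Q * φ) * star W) (Q * D' * Q)
  have t4' : ‖W * (Ee * Q * Q) * star W - Q * (φ * Q) * star W‖ ≤ δ := by
    rw [eφ]; exact t4
  have t6' : ‖Q * (Q * φ) * star W - Q * D' * Q‖ ≤ δ := by
    rw [e5]; exact t6
  linarith

end CStar

section NonUnital
variable {A : Type*} [NonUnitalCStarAlgebra A]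

lemma iota_mul (x y : A) :
    DoubleCentralizer.coe ℂ (x * y) = DoubleCentralizer.coe ℂ x * DoubleCentralizer.coe ℂ y :=
  map_mul (DoubleCentralizer.coeHom (𝕜 := ℂ) (A := A)) x y

lemma iota_sub (x y : A) :
    DoubleCentralizer.coe ℂ (x - y) = DoubleCentralizer.coe ℂ x - DoubleCentralizer.coe ℂ y :=
  map_sub (DoubleCentralizer.coeHom (𝕜 := ℂ) (A := A)) x y

lemma norm_iota (a : A) : ‖DoubleCentralizer.coe ℂ a‖ = ‖a‖ := by
  rw [← DoubleCentralizer.norm_fst (DoubleCentralizer.coe ℂ a), DoubleCentralizer.coe_fst,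
    ContinuousLinearMap.opNorm_mul_apply]

lemma cancel_right {c d : A} (h : ∀ y, c * y = d * y) : c = d := by
  have h0 : (c - d) * star (c - d) = 0 := by
    rw [sub_mul, h (star (c - d)), sub_self]
  have h2 := CStarRing.norm_self_mul_star (x := c - d)
  rw [h0, norm_zero] at h2
  have h3 : ‖c - d‖ = 0 := by nlinarith [norm_nonneg (c - d)]
  rwa [norm_eq_zero, sub_eq_zero] at h3

lemma iota_mul_right (a : A) (m : 𝓜(ℂ, A)) :
    DoubleCentralizer.coe ℂ a * m = DoubleCentralizer.coe ℂ (m.snd a) := by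
  refine DoubleCentralizer.ext _ _ _ _ (Prod.ext ?_ ?_)
  · exact ContinuousLinearMap.ext fun x => (m.central a x).symm
  · refine ContinuousLinearMap.ext fun x => ?_
    show m.snd (x * a) = x * m.snd a
    refine cancel_right fun y => ?_
    calc m.snd (x * a) * y = (x * a) * m.fst y := m.central _ _
      _ = x * (a * m.fst y) := mul_assoc _ _ _
      _ = x * (m.snd a * y) := by rw [m.central]
      _ = x * m.snd a * y := (mul_assoc _ _ _).symm

/-- iterated squaring: `iter k a = a ^ (2 ^ k)` -/
def iter (k : ℕ) (a : A) : A := Nat.rec a (fun _ b => b * b) k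

@[simp] lemma iter_zero (a : A) : iter 0 a = a := rfl
@[simp] lemma iter_succ (k : ℕ) (a : A) : iter (k + 1) a = iter k a * iter k a := rfl

lemma iter_orth {a b : A} (hab : a * b = 0) (hba : b * a = 0) (k : ℕ) :
    iter k a * iter k b = 0 ∧ iter k b * iter k a = 0 := by
  induction k with
  | zero => exact ⟨hab, hba⟩
  | succ k ih =>
    constructor
    · calc iter k a * iter k a * (iter k b * iter k b)
          = iter k a * (iter k a * iter k b) * iter k b := by noncomm_ring
        _ = 0 := by rw [ih.1, mul_zero, zero_mul]
    · calc iter k b * iter k b * (iter k a * iter k a)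
          = iter k b * (iter k b * iter k a) * iter k a := by noncomm_ring
        _ = 0 := by rw [ih.2, mul_zero, zero_mul]

lemma sum_mul_sum_orth {G : Type*} [Fintype G] (p : G → A)
    (horth : ∀ g h, g ≠ h → p g * p h = 0) :
    (∑ g, p g) * (∑ g, p g) = ∑ g, p g * p g := by
  rw [Finset.sum_mul_sum]
  exact Finset.sum_congr rfl fun g _ =>
    Finset.sum_eq_single g (fun h _ hne => horth g h (Ne.symm hne)) (by simp)

lemma iter_sum {G : Type*} [Fintype G] (p : G → A)
    (horth : ∀ g h, g ≠ h → p g * p h = 0) (k : ℕ) :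
    iter k (∑ g, p g) = ∑ g, iter k (p g) := by
  induction k with
  | zero => simp
  | succ k ih =>
    rw [iter_succ, ih, Finset.sum_mul_sum]
    exact Finset.sum_congr rfl fun g _ =>
      Finset.sum_eq_single g
        (fun h _ hne => (iter_orth (horth g h (Ne.symm hne)) (horth h g hne) k).1) (by simp)

lemma norm_iter_le_one {a : A} (ha : ‖a‖ ≤ 1) (k : ℕ) : ‖iter k a‖ ≤ 1 := by
  induction k with
  | zero => exact ha
  | succ k ih =>
    calc ‖iter k a * iter k a‖ ≤ ‖iter k a‖ * ‖iter k a‖ := norm_mul_le _ _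
      _ ≤ 1 := by nlinarith [norm_nonneg (iter k a)]

lemma norm_iter_of_sa {a : A} (ha : star a = a) (k : ℕ) : ‖iter k a‖ = ‖a‖ ^ (2 ^ k) := by
  have hsa : ∀ j, star (iter j a) = iter j a := by
    intro j; induction j with
    | zero => exact ha
    | succ j ih => rw [iter_succ, star_mul, ih]
  induction k with
  | zero => simp
  | succ k ih =>
    calc ‖iter k a * iter k a‖ = ‖star (iter k a) * iter k a‖ := by rw [hsa k]
      _ = ‖iter k a‖ * ‖iter k a‖ := CStarRing.norm_star_mul_self
      _ = (‖a‖ ^ 2 ^ k) * (‖a‖ ^ 2 ^ k) := by rw [ih]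
      _ = ‖a‖ ^ 2 ^ (k + 1) := by rw [← pow_add]; ring_nf

lemma norm_orth_sum_le_one {G : Type*} [Fintype G] (p : G → A)
    (hsa : ∀ g, star (p g) = p g) (hn : ∀ g, ‖p g‖ ≤ 1)
    (horth : ∀ g h, g ≠ h → p g * p h = 0) : ‖∑ g, p g‖ ≤ 1 := by
  set S := ∑ g, p g with hS
  have hSsa : star S = S := by rw [hS, star_sum]; exact Finset.sum_congr rfl fun g _ => hsa g
  by_contra hgt
  push_neg at hgt
  obtain ⟨k, hk⟩ := pow_unbounded_of_one_lt (Fintype.card G : ℝ) hgt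
  have hbound : ‖S‖ ^ (2 ^ k) ≤ (Fintype.card G : ℝ) := by
    rw [← norm_iter_of_sa hSsa, hS, iter_sum p horth]
    calc ‖∑ g, iter k (p g)‖ ≤ ∑ g, ‖iter k (p g)‖ := norm_sum_le _ _
      _ ≤ ∑ _g : G, (1 : ℝ) := Finset.sum_le_sum fun g _ => norm_iter_le_one (hn g) k
      _ = (Fintype.card G : ℝ) := by simp
  have hmono : ‖S‖ ^ k ≤ ‖S‖ ^ (2 ^ k) :=
    pow_le_pow_right₀ hgt.le (Nat.lt_two_pow_self (n := k)).le
  linarith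

end NonUnital
end Stmt10Aux

open Stmt10Aux in
/-- The Rokhlin property is invariant under exterior equivalence of actions.
Here `𝓜(ℂ, A)` is the multiplier algebra of `A`, `DoubleCentralizer.coe ℂ` the
canonical embedding `A → 𝓜(ℂ, A)`, `αM` the extension of `α` to `𝓜(ℂ, A)`,
and `ω` an `α`-cocycle of unitaries implementing the exterior equivalence. -/
theorem stmt10 {G A : Type*} [Group G] [Fintype G] [NonUnitalCStarAlgebra A]
    (α : G → (A ≃⋆ₐ[ℂ] A)) (hα : ∀ g h a, α (g * h) a = α g (α h a))
    (β : G → (A ≃⋆ₐ[ℂ] A)) (hβ : ∀ g h a, β (g * h) a = β g (β h a))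
    (αM : G → (𝓜(ℂ, A) ≃⋆ₐ[ℂ] 𝓜(ℂ, A)))
    (hαM : ∀ (g : G) (a : A),
      αM g (DoubleCentralizer.coe ℂ a) = DoubleCentralizer.coe ℂ (α g a))
    (ω : G → 𝓜(ℂ, A))
    (hunitary : ∀ g, star (ω g) * ω g = 1 ∧ ω g * star (ω g) = 1)
    (hcocycle : ∀ g h, ω (g * h) = ω g * αM g (ω h))
    (hext : ∀ (g : G) (a : A),
      DoubleCentralizer.coe ℂ (β g a)
        = ω g * DoubleCentralizer.coe ℂ (α g a) * star (ω g))
    (hRokhlin : RokhlinProperty α) :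
    RokhlinProperty β := by
  classical
  intro ε hε F
  -- isometry facts
  have hβiso : ∀ (g : G) (x : A), ‖β g x‖ = ‖x‖ := fun g x =>
    NonUnitalStarAlgHom.norm_map (β g) (β g).injective x
  have hαiso : ∀ (g : G) (x : A), ‖α g x‖ = ‖x‖ := fun g x =>
    NonUnitalStarAlgHom.norm_map (α g) (α g).injective x
  -- constants
  set n : ℕ := Fintype.card G with hn
  have hn1 : (1 : ℝ) ≤ (n : ℝ) := by exact_mod_cast Nat.one_le_cast.mpr Fintype.card_pos
  set δ : ℝ := ε / (6 * (n : ℝ) + 6) with hδdef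
  have hden : (0 : ℝ) < 6 * (n : ℝ) + 6 := by positivity
  have hδ : 0 < δ := div_pos hε hden
  have hkey : ∀ X : ℝ, 0 ≤ X → X ≤ 5 * (n : ℝ) + 1 → X * δ < ε := by
    intro X hX0 hX
    have h1 : X * δ < (6 * (n : ℝ) + 6) * δ := by
      refine mul_lt_mul_of_pos_right ?_ hδ
      linarith
    calc X * δ < (6 * (n : ℝ) + 6) * δ := h1
      _ = ε := by rw [hδdef, mul_comm, div_mul_cancel₀ _ (ne_of_gt hden)]
  -- first tower
  set F₁ : Finset A := (Finset.univ ×ˢ F).image (fun x : G × A => (β x.1).symm x.2) with hF₁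
  obtain ⟨p, hpsq, hpn, hporth, _hpeq, hpcomm, hpunit⟩ := hRokhlin δ hδ F₁
  obtain ⟨S, hS⟩ : ∃ x : A, x = ∑ g, p g := ⟨_, rfl⟩
  rw [← hS] at hpunit
  have hpsa : ∀ g, star (p g) = p g := by
    intro g; obtain ⟨s, hs⟩ := hpsq g; rw [hs, star_mul, star_star]
  have hSsa : star S = S := by
    rw [hS, star_sum]; exact Finset.sum_congr rfl fun g _ => hpsa g
  have hSn : ‖S‖ ≤ 1 := by rw [hS]; exact norm_orth_sum_le_one p hpsa hpn hporth
  have hmemF₁ : ∀ g : G, ∀ a ∈ F, (β g).symm a ∈ F₁ := by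
    intro g a ha; rw [hF₁]
    exact Finset.mem_image.mpr ⟨(g, a), by simp [ha], rfl⟩
  have hScomm : ∀ c ∈ F₁, ‖S * c - c * S‖ ≤ (n : ℝ) * δ := by
    intro c hc
    have he : S * c - c * S = ∑ g, (p g * c - c * p g) := by
      rw [Finset.sum_sub_distrib, ← Finset.sum_mul, ← Finset.mul_sum, ← hS]
    rw [he]
    calc ‖∑ g, (p g * c - c * p g)‖ ≤ ∑ g, ‖p g * c - c * p g‖ := norm_sum_le _ _
      _ ≤ ∑ _g : G, δ := Finset.sum_le_sum fun g _ => (hpcomm c hc g).le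
      _ = (n : ℝ) * δ := by
          rw [Finset.sum_const, Finset.card_univ, nsmul_eq_mul, hn]
  -- the bump function d and its translates
  obtain ⟨d, hd⟩ : ∃ x : A, x = S * S := ⟨_, rfl⟩
  have hdn : ‖d‖ ≤ 1 := by
    rw [hd]
    calc ‖S * S‖ ≤ ‖S‖ * ‖S‖ := norm_mul_le _ _
      _ ≤ 1 := by nlinarith [norm_nonneg S]
  obtain ⟨D, hD⟩ : ∃ f : G → A, f = fun g => β g d := ⟨_, rfl⟩
  have hDg : ∀ k, D k = β k d := fun k => by rw [hD]
  have hDn : ∀ k, ‖D k‖ ≤ 1 := by intro k; rw [hDg, hβiso]; exact hdn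
  obtain ⟨E, hE⟩ : ∃ f : G → G → A, f = fun g h => α g (β h d) := ⟨_, rfl⟩
  have hEg : ∀ g h, E g h = α g (β h d) := fun g h => by rw [hE]
  have hEn : ∀ g h, ‖E g h‖ ≤ 1 := by intro g h; rw [hEg, hαiso, hβiso]; exact hdn
  obtain ⟨φf, hφf⟩ : ∃ f : G → G → A, f = fun g h => ((ω g).snd (D (g * h)) : A) := ⟨_, rfl⟩
  have hφeq : ∀ g h, DoubleCentralizer.coe ℂ (D (g * h)) * ω g
      = DoubleCentralizer.coe ℂ (φf g h) := fun g h => by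
    rw [hφf]; exact iota_mul_right (D (g * h)) (ω g)
  -- second tower
  set F₂ : Finset A :=
    ((F ∪ Finset.univ.image D) ∪ Finset.univ.image (fun x : G × G => E x.1 x.2)) ∪
      Finset.univ.image (fun x : G × G => φf x.1 x.2) with hF₂
  have haF₂ : ∀ a ∈ F, a ∈ F₂ := by
    intro a ha; rw [hF₂]
    exact Finset.mem_union_left _ (Finset.mem_union_left _ (Finset.mem_union_left _ ha))
  have hDF₂ : ∀ k, D k ∈ F₂ := by
    intro k; rw [hF₂]
    exact Finset.mem_union_left _ (Finset.mem_union_left _ (Finset.mem_union_right _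
      (Finset.mem_image.mpr ⟨k, Finset.mem_univ _, rfl⟩)))
  have hEF₂ : ∀ g h, E g h ∈ F₂ := by
    intro g h; rw [hF₂]
    exact Finset.mem_union_left _ (Finset.mem_union_right _
      (Finset.mem_image.mpr ⟨(g, h), Finset.mem_univ _, rfl⟩))
  have hφF₂ : ∀ g h, φf g h ∈ F₂ := by
    intro g h; rw [hF₂]
    exact Finset.mem_union_right _ (Finset.mem_image.mpr ⟨(g, h), Finset.mem_univ _, rfl⟩)
  obtain ⟨q, hqsq, hqn, hqorth, hqeq, hqcomm, hqunit⟩ := hRokhlin δ hδ F₂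
  have hqsa : ∀ g, star (q g) = q g := by
    intro g; obtain ⟨t, ht⟩ := hqsq g; rw [ht, star_mul, star_star]
  have hqDn : ∀ g, ‖q g * D g‖ ≤ 1 := fun g =>
    norm_mul_le_of_le (hqn g) (hDn g)
  have hDqn : ∀ g, ‖D g * q g‖ ≤ 1 := fun g =>
    norm_mul_le_of_le (hDn g) (hqn g)
  -- commutator of D k with members of F (via the first tower)
  have hDcomm : ∀ (g : G), ∀ a ∈ F, ‖D g * a - a * D g‖ ≤ 2 * ((n : ℝ) * δ) := by
    intro g a ha
    have hc1 : (β g).symm a ∈ F₁ := hmemF₁ g a ha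
    have h1 : D g * a - a * D g = β g (d * ((β g).symm a) - ((β g).symm a) * d) := by
      have e1 : β g (d * ((β g).symm a) - ((β g).symm a) * d)
          = β g d * a - a * β g d := by
        rw [map_sub, map_mul (β g) d ((β g).symm a), map_mul (β g) ((β g).symm a) d,
          StarAlgEquiv.apply_symm_apply]
      rw [e1, hDg]
    rw [h1, hβiso]
    have h2 : d * ((β g).symm a) - ((β g).symm a) * d
        = S * (S * ((β g).symm a) - ((β g).symm a) * S)
          + (S * ((β g).symm a) - ((β g).symm a) * S) * S := by
      rw [hd]; noncomm_ring
    rw [h2]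
    have h3 := hScomm _ hc1
    have b1 : ‖S * (S * ((β g).symm a) - ((β g).symm a) * S)‖ ≤ (n : ℝ) * δ := by
      refine norm_mul_le_of_le' hSn h3
    have b2 : ‖(S * ((β g).symm a) - ((β g).symm a) * S) * S‖ ≤ (n : ℝ) * δ := by
      refine norm_mul_le_of_le h3 hSn
    calc ‖S * (S * ((β g).symm a) - ((β g).symm a) * S)
          + (S * ((β g).symm a) - ((β g).symm a) * S) * S‖
        ≤ ‖S * (S * ((β g).symm a) - ((β g).symm a) * S)‖
          + ‖(S * ((β g).symm a) - ((β g).symm a) * S) * S‖ := norm_add_le _ _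
      _ ≤ 2 * ((n : ℝ) * δ) := by linarith
  -- D k acts approximately as a unit on members of F
  have hDunit : ∀ (g : G), ∀ a ∈ F, ‖D g * a - a‖ ≤ 2 * δ := by
    intro g a ha
    have hc1 : (β g).symm a ∈ F₁ := hmemF₁ g a ha
    have h1 : D g * a - a = β g (d * ((β g).symm a) - ((β g).symm a)) := by
      have e1 : β g (d * ((β g).symm a) - ((β g).symm a)) = β g d * a - a := by
        rw [map_sub, map_mul (β g) d ((β g).symm a), StarAlgEquiv.apply_symm_apply]
      rw [e1, hDg]
    rw [h1, hβiso]
    have h2 : d * ((β g).symm a) - ((β g).symm a)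
        = S * (S * ((β g).symm a) - ((β g).symm a)) + (S * ((β g).symm a) - ((β g).symm a)) := by
      rw [hd]; noncomm_ring
    rw [h2]
    have h3 := (hpunit _ hc1).le
    have b1 : ‖S * (S * ((β g).symm a) - ((β g).symm a))‖ ≤ δ := norm_mul_le_of_le' hSn h3
    calc ‖S * (S * ((β g).symm a) - ((β g).symm a)) + (S * ((β g).symm a) - ((β g).symm a))‖
        ≤ ‖S * (S * ((β g).symm a) - ((β g).symm a))‖
          + ‖S * ((β g).symm a) - ((β g).symm a)‖ := norm_add_le _ _
      _ ≤ 2 * δ := by linarith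
  -- the new tower
  refine ⟨fun g => q g * D g * q g, ?_, ?_, ?_, ?_, ?_, ?_⟩
  · -- positivity
    intro g
    refine ⟨β g S * q g, ?_⟩
    show q g * D g * q g = star (β g S * q g) * (β g S * q g)
    have h1 : star (β g S * q g) = q g * β g S := by
      rw [star_mul, hqsa g, ← map_star, hSsa]
    rw [h1]
    have h2 : D g = β g S * β g S := by rw [hDg, hd, map_mul]
    rw [h2]; noncomm_ring
  · -- norm bound
    intro g
    show ‖q g * D g * q g‖ ≤ 1
    calc ‖q g * D g * q g‖ ≤ ‖q g * D g‖ * ‖q g‖ := norm_mul_le _ _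
      _ ≤ 1 := by nlinarith [hqDn g, hqn g, norm_nonneg (q g * D g), norm_nonneg (q g)]
  · -- orthogonality
    intro g h hgh
    show q g * D g * q g * (q h * D h * q h) = 0
    have h0 : q g * q h = 0 := hqorth g h hgh
    calc q g * D g * q g * (q h * D h * q h)
        = q g * D g * (q g * q h) * (D h * q h) := by noncomm_ring
      _ = 0 := by rw [h0, mul_zero, zero_mul]
  · -- approximate equivariance
    intro g h
    show ‖β g (q h * D h * q h) - q (g * h) * D (g * h) * q (g * h)‖ < ε
    -- expansion of the left-hand side in the multiplier algebra
    have hX0 : DoubleCentralizer.coe ℂ (β g (q h * D h * q h))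
        = ω g * (DoubleCentralizer.coe ℂ (α g (q h)) * DoubleCentralizer.coe ℂ (E g h)
            * DoubleCentralizer.coe ℂ (α g (q h))) * star (ω g) := by
      have hmid : DoubleCentralizer.coe ℂ (α g (q h * D h * q h))
          = DoubleCentralizer.coe ℂ (α g (q h)) * DoubleCentralizer.coe ℂ (E g h)
            * DoubleCentralizer.coe ℂ (α g (q h)) := by
        rw [map_mul (α g) (q h * D h) (q h), map_mul (α g) (q h) (D h),
          iota_mul, iota_mul, hDg, hEg]
      rw [hext g (q h * D h * q h), hmid]
    -- exact commutation of ω g past E g h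
    have hWE : ω g * DoubleCentralizer.coe ℂ (E g h)
        = DoubleCentralizer.coe ℂ (D (g * h)) * ω g := by
      have h1 := hext g (β h d)
      have h2 : DoubleCentralizer.coe ℂ (β g (β h d)) * ω g
          = ω g * DoubleCentralizer.coe ℂ (E g h) := by
        rw [h1, hEg]
        calc ω g * DoubleCentralizer.coe ℂ (α g (β h d)) * star (ω g) * ω g
            = ω g * DoubleCentralizer.coe ℂ (α g (β h d)) * (star (ω g) * ω g) := by
              noncomm_ring
          _ = ω g * DoubleCentralizer.coe ℂ (α g (β h d)) := by
              rw [(hunitary g).1, mul_one]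
      have h3 : β g (β h d) = D (g * h) := by rw [hDg, hβ g h d]
      rw [h3] at h2; exact h2.symm
    -- the key estimate in the multiplier algebra
    have hmain : ‖ω g * (DoubleCentralizer.coe ℂ (α g (q h)) * DoubleCentralizer.coe ℂ (E g h)
          * DoubleCentralizer.coe ℂ (α g (q h))) * star (ω g)
        - DoubleCentralizer.coe ℂ (q (g * h)) * DoubleCentralizer.coe ℂ (D (g * h))
          * DoubleCentralizer.coe ℂ (q (g * h))‖ ≤ 6 * δ := by
      refine cond4_est (hunitary g).1 (hunitary g).2 ?_ ?_ ?_ ?_ ?_ ?_ ?_ hWE (hφeq g h)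
      · rw [norm_iota]; exact hqn (g * h)
      · rw [norm_iota, hαiso]; exact hqn h
      · rw [norm_iota]; exact hEn g h
      · rw [← iota_sub, norm_iota]; exact (hqeq g h).le
      · rw [← iota_mul, ← iota_mul, ← iota_sub, norm_iota]
        exact (hqcomm (E g h) (hEF₂ g h) (g * h)).le
      · rw [← iota_mul, ← iota_mul, ← iota_sub, norm_iota]
        exact (hqcomm (φf g h) (hφF₂ g h) (g * h)).le
      · rw [← iota_mul, ← iota_mul, ← iota_sub, norm_iota]
        exact (hqcomm (D (g * h)) (hDF₂ (g * h)) (g * h)).le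
    have hA : ‖β g (q h * D h * q h) - q (g * h) * D (g * h) * q (g * h)‖ ≤ 6 * δ := by
      calc ‖β g (q h * D h * q h) - q (g * h) * D (g * h) * q (g * h)‖
          = ‖DoubleCentralizer.coe ℂ
              (β g (q h * D h * q h) - q (g * h) * D (g * h) * q (g * h))‖ :=
            (norm_iota _).symm
        _ = ‖DoubleCentralizer.coe ℂ (β g (q h * D h * q h))
              - DoubleCentralizer.coe ℂ (q (g * h)) * DoubleCentralizer.coe ℂ (D (g * h))
                * DoubleCentralizer.coe ℂ (q (g * h))‖ := by
            rw [iota_sub, iota_mul, iota_mul]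
        _ ≤ 6 * δ := by rw [hX0]; exact hmain
    calc ‖β g (q h * D h * q h) - q (g * h) * D (g * h) * q (g * h)‖ ≤ 6 * δ := hA
      _ < ε := hkey 6 (by norm_num) (by linarith)
  · -- approximate centrality
    intro a ha g
    show ‖q g * D g * q g * a - a * (q g * D g * q g)‖ < ε
    have hqa := hqcomm a (haF₂ a ha) g
    have hDa := hDcomm g a ha
    have d1 : ‖q g * D g * q g * a - q g * D g * (a * q g)‖ ≤ δ := by
      have e : q g * D g * q g * a - q g * D g * (a * q g)
          = (q g * D g) * (q g * a - a * q g) := by noncomm_ring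
      rw [e]
      exact norm_mul_le_of_le' (hqDn g) hqa.le
    have d2 : ‖q g * D g * (a * q g) - q g * (a * (D g * q g))‖ ≤ 2 * ((n : ℝ) * δ) := by
      have e : q g * D g * (a * q g) - q g * (a * (D g * q g))
          = q g * ((D g * a - a * D g) * q g) := by noncomm_ring
      rw [e]
      exact norm_mul_le_of_le' (hqn g) (norm_mul_le_of_le hDa (hqn g))
    have d3 : ‖q g * (a * (D g * q g)) - a * (q g * D g * q g)‖ ≤ δ := by
      have e : q g * (a * (D g * q g)) - a * (q g * D g * q g)
          = (q g * a - a * q g) * (D g * q g) := by noncomm_ring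
      rw [e]
      exact norm_mul_le_of_le hqa.le (hDqn g)
    have := tri3 (q g * D g * q g * a) (q g * D g * (a * q g))
      (q g * (a * (D g * q g))) (a * (q g * D g * q g))
    have hle : ‖q g * D g * q g * a - a * (q g * D g * q g)‖ ≤ (2 * (n : ℝ) + 2) * δ := by
      linarith
    calc ‖q g * D g * q g * a - a * (q g * D g * q g)‖ ≤ (2 * (n : ℝ) + 2) * δ := hle
      _ < ε := hkey _ (by positivity) (by linarith)
  · -- approximate unit
    intro a ha
    show ‖(∑ g, q g * D g * q g) * a - a‖ < ε
    have hqa : ∀ g, ‖q g * a - a * q g‖ < δ := fun g => hqcomm a (haF₂ a ha) g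
    -- stage 1
    have d1 : ‖(∑ g, q g * D g * q g) * a - ∑ g, q g * D g * (a * q g)‖ ≤ (n : ℝ) * δ := by
      have e : (∑ g, q g * D g * q g) * a - ∑ g, q g * D g * (a * q g)
          = ∑ g, ((q g * D g) * (q g * a - a * q g)) := by
        rw [Finset.sum_mul, ← Finset.sum_sub_distrib]
        exact Finset.sum_congr rfl fun g _ => by noncomm_ring
      rw [e]
      calc ‖∑ g, ((q g * D g) * (q g * a - a * q g))‖
          ≤ ∑ g, ‖(q g * D g) * (q g * a - a * q g)‖ := norm_sum_le _ _
        _ ≤ ∑ _g : G, δ := Finset.sum_le_sum fun g _ =>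
            norm_mul_le_of_le' (hqDn g) (hqa g).le
        _ = (n : ℝ) * δ := by rw [Finset.sum_const, Finset.card_univ, nsmul_eq_mul, hn]
    -- stage 2
    have d2 : ‖(∑ g, q g * D g * (a * q g)) - ∑ g, q g * (a * q g)‖ ≤ (n : ℝ) * (2 * δ) := by
      have e : (∑ g, q g * D g * (a * q g)) - ∑ g, q g * (a * q g)
          = ∑ g, (q g * ((D g * a - a) * q g)) := by
        rw [← Finset.sum_sub_distrib]
        exact Finset.sum_congr rfl fun g _ => by noncomm_ring
      rw [e]
      calc ‖∑ g, (q g * ((D g * a - a) * q g))‖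
          ≤ ∑ g, ‖q g * ((D g * a - a) * q g)‖ := norm_sum_le _ _
        _ ≤ ∑ _g : G, 2 * δ := Finset.sum_le_sum fun g _ =>
            norm_mul_le_of_le' (hqn g) (norm_mul_le_of_le (hDunit g a ha) (hqn g))
        _ = (n : ℝ) * (2 * δ) := by rw [Finset.sum_const, Finset.card_univ, nsmul_eq_mul, hn]
    -- stage 3
    have d3 : ‖(∑ g, q g * (a * q g)) - ∑ g, q g * q g * a‖ ≤ (n : ℝ) * δ := by
      have e : (∑ g, q g * (a * q g)) - ∑ g, q g * q g * a
          = ∑ g, (q g * (a * q g - q g * a)) := by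
        rw [← Finset.sum_sub_distrib]
        exact Finset.sum_congr rfl fun g _ => by noncomm_ring
      rw [e]
      calc ‖∑ g, (q g * (a * q g - q g * a))‖
          ≤ ∑ g, ‖q g * (a * q g - q g * a)‖ := norm_sum_le _ _
        _ ≤ ∑ _g : G, δ := Finset.sum_le_sum fun g _ => by
            refine norm_mul_le_of_le' (hqn g) ?_
            rw [norm_sub_rev]; exact (hqa g).le
        _ = (n : ℝ) * δ := by rw [Finset.sum_const, Finset.card_univ, nsmul_eq_mul, hn]
    -- stage 4 (exact)
    have e4 : (∑ g, q g * q g * a) = (∑ g, q g) * ((∑ g, q g) * a) := by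
      rw [← mul_assoc, sum_mul_sum_orth q hqorth, Finset.sum_mul]
    -- stage 5
    have hqsumn : ‖∑ g, q g‖ ≤ (n : ℝ) := by
      calc ‖∑ g, q g‖ ≤ ∑ g, ‖q g‖ := norm_sum_le _ _
        _ ≤ ∑ _g : G, (1 : ℝ) := Finset.sum_le_sum fun g _ => hqn g
        _ = (n : ℝ) := by rw [Finset.sum_const, Finset.card_univ, nsmul_eq_mul, hn, mul_one]
    have hqu := hqunit a (haF₂ a ha)
    have d4 : ‖(∑ g, q g) * ((∑ g, q g) * a) - (∑ g, q g) * a‖ ≤ (n : ℝ) * δ := by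
      have e : (∑ g, q g) * ((∑ g, q g) * a) - (∑ g, q g) * a
          = (∑ g, q g) * ((∑ g, q g) * a - a) := by noncomm_ring
      rw [e]
      calc ‖(∑ g, q g) * ((∑ g, q g) * a - a)‖
          ≤ ‖∑ g, q g‖ * ‖(∑ g, q g) * a - a‖ := norm_mul_le _ _
        _ ≤ (n : ℝ) * δ :=
            mul_le_mul hqsumn hqu.le (norm_nonneg _) (by linarith)
    have d5 : ‖(∑ g, q g) * a - a‖ ≤ δ := hqu.le
    -- assemble
    have tchain := tri5 ((∑ g, q g * D g * q g) * a) (∑ g, q g * D g * (a * q g))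
      (∑ g, q g * (a * q g)) (∑ g, q g * q g * a) ((∑ g, q g) * a) a
    have d34 : ‖(∑ g, q g * q g * a) - (∑ g, q g) * a‖ ≤ (n : ℝ) * δ := by
      rw [e4]; exact d4
    have hle : ‖(∑ g, q g * D g * q g) * a - a‖ ≤ (5 * (n : ℝ) + 1) * δ := by
      linarith
    calc ‖(∑ g, q g * D g * q g) * a - a‖ ≤ (5 * (n : ℝ) + 1) * δ := hle
      _ < ε := hkey _ (by positivity) (by linarith)
end

section
/- Let A be a nonzero C*-algebra, let G be a finite group, and let α : G → Aut(A) be an action of G on A with the Rokhlin property. Then α is pointwise outer: for every g ∈ G with g ≠ e there is no unitary u in the multiplier algebra 𝓜(A) of A (u* u = u u* = 1) such that ι(α_g(a)) = u ι(a) u* for all a ∈ A, where ι : A → 𝓜(A) is the canonical *-embedding. -/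
open scoped MultiplierAlgebra

namespace RokhlinAux

variable {A : Type*} [NonUnitalCStarAlgebra A]

/-- Left multiplication is faithful in a C*-algebra. -/
lemma left_faithful {z w : A} (h : ∀ y : A, y * z = y * w) : z = w := by
  have h2 : star (z - w) * (z - w) = 0 := by
    rw [mul_sub, h (star (z - w)), sub_self]
  exact sub_eq_zero.mp ((CStarRing.star_mul_self_eq_zero_iff _).mp h2)

/-- The canonical embedding into the multiplier algebra is isometric. -/
lemma norm_coe (a : A) : ‖DoubleCentralizer.coe ℂ a‖ = ‖a‖ := by
  rw [← DoubleCentralizer.norm_fst, DoubleCentralizer.coe_fst,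
    ContinuousLinearMap.opNorm_mul_apply]

lemma coe_mul (x y : A) :
    DoubleCentralizer.coe ℂ (x * y) = DoubleCentralizer.coe ℂ x * DoubleCentralizer.coe ℂ y :=
  map_mul (DoubleCentralizer.coeHom (𝕜 := ℂ) (A := A)) x y

lemma coe_sub (x y : A) :
    DoubleCentralizer.coe ℂ (x - y) = DoubleCentralizer.coe ℂ x - DoubleCentralizer.coe ℂ y :=
  map_sub (DoubleCentralizer.coeHom (𝕜 := ℂ) (A := A)) x y

/-- `A` is an ideal in its multiplier algebra: `u * ι a = ι (u.fst a)`. -/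
lemma coe_fst_apply (u : 𝓜(ℂ, A)) (a : A) :
    DoubleCentralizer.coe ℂ (u.fst a) = u * DoubleCentralizer.coe ℂ a := by
  refine DoubleCentralizer.ext ℂ A _ _ (Prod.ext ?_ ?_)
  · refine ContinuousLinearMap.ext fun x => ?_
    have lhs : ((DoubleCentralizer.coe ℂ (u.fst a)).fst : A →L[ℂ] A) x = u.fst a * x := rfl
    have rhs : ((u * DoubleCentralizer.coe ℂ a).fst : A →L[ℂ] A) x = u.fst (a * x) := rfl
    rw [lhs, rhs]
    refine left_faithful fun y => ?_
    calc y * (u.fst a * x) = (y * u.fst a) * x := (mul_assoc _ _ _).symm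
      _ = (u.snd y * a) * x := by rw [u.central]
      _ = u.snd y * (a * x) := mul_assoc _ _ _
      _ = y * u.fst (a * x) := u.central y (a * x)
  · refine ContinuousLinearMap.ext fun x => ?_
    have lhs : ((DoubleCentralizer.coe ℂ (u.fst a)).snd : A →L[ℂ] A) x = x * u.fst a := rfl
    have rhs : ((u * DoubleCentralizer.coe ℂ a).snd : A →L[ℂ] A) x = u.snd x * a := rfl
    rw [lhs, rhs, u.central]

/-- The key estimate: if the automorphism sending `x` to `y` is implemented by a unitary
`u` of the multiplier algebra, and `x` has small product with `y`, and `x` approximately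
commutes with `a` and with `u.fst a`, then `a * x²` is small. -/
lemma step_bound (u : 𝓜(ℂ, A)) (hu1 : star u * u = 1) (hu_norm : ‖u‖ = 1)
    (hu_mul : ∀ z : 𝓜(ℂ, A), ‖u * z‖ = ‖z‖)
    (a x y : A) (hx : ‖x‖ ≤ 1) (ha : ‖a‖ = 1)
    (himp : DoubleCentralizer.coe ℂ y = u * DoubleCentralizer.coe ℂ x * star u)
    {ε : ℝ} (h1 : ‖x * y‖ < ε)
    (h4 : ‖x * a - a * x‖ < ε)
    (h6 : ‖x * u.fst a - u.fst a * x‖ < ε) :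
    ‖a * (x * x)‖ ≤ 3 * ε := by
  have hc : DoubleCentralizer.coe ℂ (u.fst a) = u * DoubleCentralizer.coe ℂ a :=
    coe_fst_apply u a
  have hXn : ‖DoubleCentralizer.coe ℂ x‖ ≤ 1 := by rw [norm_coe]; exact hx
  have hAn : ‖DoubleCentralizer.coe ℂ a‖ = 1 := by rw [norm_coe]; exact ha
  -- ‖X u X‖ < ε
  have h2 : ‖DoubleCentralizer.coe ℂ x * u * DoubleCentralizer.coe ℂ x‖ < ε := by
    have key : DoubleCentralizer.coe ℂ x * u * DoubleCentralizer.coe ℂ x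
        = (DoubleCentralizer.coe ℂ x * DoubleCentralizer.coe ℂ y) * u := by
      rw [himp]
      simp only [mul_assoc, hu1, mul_one]
    rw [key]
    calc ‖(DoubleCentralizer.coe ℂ x * DoubleCentralizer.coe ℂ y) * u‖
        ≤ ‖DoubleCentralizer.coe ℂ x * DoubleCentralizer.coe ℂ y‖ * ‖u‖ := norm_mul_le _ _
      _ = ‖x * y‖ := by rw [hu_norm, mul_one, ← coe_mul, norm_coe]
      _ < ε := h1
  -- the three pieces
  set T1 : 𝓜(ℂ, A) := DoubleCentralizer.coe ℂ (u.fst a * (x * x))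
      - DoubleCentralizer.coe ℂ (x * u.fst a * x) with hT1
  set T2 : 𝓜(ℂ, A) := DoubleCentralizer.coe ℂ (x * u.fst a * x)
      - DoubleCentralizer.coe ℂ x * u * DoubleCentralizer.coe ℂ (x * a) with hT2
  set T3 : 𝓜(ℂ, A) := DoubleCentralizer.coe ℂ x * u * DoubleCentralizer.coe ℂ (x * a) with hT3
  have hz : u * DoubleCentralizer.coe ℂ (a * (x * x))
      = DoubleCentralizer.coe ℂ (u.fst a * (x * x)) := by
    simp only [coe_mul, hc, mul_assoc]
  have hsplit : u * DoubleCentralizer.coe ℂ (a * (x * x)) = T1 + T2 + T3 := by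
    rw [hz, hT1, hT2, hT3]; abel
  have hmid : DoubleCentralizer.coe ℂ (x * u.fst a * x)
      = DoubleCentralizer.coe ℂ x * u * DoubleCentralizer.coe ℂ (a * x) := by
    simp only [coe_mul, hc, mul_assoc]
  have hbT1 : ‖T1‖ ≤ ε := by
    rw [hT1, ← coe_sub, norm_coe]
    have e : u.fst a * (x * x) - x * u.fst a * x = (u.fst a * x - x * u.fst a) * x := by
      noncomm_ring
    rw [e]
    calc ‖(u.fst a * x - x * u.fst a) * x‖
        ≤ ‖u.fst a * x - x * u.fst a‖ * ‖x‖ := norm_mul_le _ _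
      _ ≤ ‖u.fst a * x - x * u.fst a‖ * 1 :=
          mul_le_mul_of_nonneg_left hx (norm_nonneg _)
      _ = ‖x * u.fst a - u.fst a * x‖ := by rw [mul_one, norm_sub_rev]
      _ ≤ ε := h6.le
  have hbT2 : ‖T2‖ ≤ ε := by
    rw [hT2, hmid, ← mul_sub, ← coe_sub]
    calc ‖DoubleCentralizer.coe ℂ x * u * DoubleCentralizer.coe ℂ (a * x - x * a)‖
        ≤ ‖DoubleCentralizer.coe ℂ x * u‖ * ‖DoubleCentralizer.coe ℂ (a * x - x * a)‖ :=
          norm_mul_le _ _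
      _ ≤ (‖DoubleCentralizer.coe ℂ x‖ * ‖u‖) * ‖DoubleCentralizer.coe ℂ (a * x - x * a)‖ :=
          mul_le_mul_of_nonneg_right (norm_mul_le _ _) (norm_nonneg _)
      _ ≤ 1 * ‖DoubleCentralizer.coe ℂ (a * x - x * a)‖ := by
          refine mul_le_mul_of_nonneg_right ?_ (norm_nonneg _)
          rw [hu_norm, mul_one]; exact hXn
      _ = ‖x * a - a * x‖ := by rw [one_mul, norm_coe, norm_sub_rev]
      _ ≤ ε := h4.le
  have hbT3 : ‖T3‖ ≤ ε := by
    have e : T3 = (DoubleCentralizer.coe ℂ x * u * DoubleCentralizer.coe ℂ x)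
        * DoubleCentralizer.coe ℂ a := by
      rw [hT3, coe_mul]
      simp only [mul_assoc]
    rw [e]
    calc ‖(DoubleCentralizer.coe ℂ x * u * DoubleCentralizer.coe ℂ x)
          * DoubleCentralizer.coe ℂ a‖
        ≤ ‖DoubleCentralizer.coe ℂ x * u * DoubleCentralizer.coe ℂ x‖
          * ‖DoubleCentralizer.coe ℂ a‖ := norm_mul_le _ _
      _ = ‖DoubleCentralizer.coe ℂ x * u * DoubleCentralizer.coe ℂ x‖ := by
          rw [hAn, mul_one]
      _ ≤ ε := h2.le
  calc ‖a * (x * x)‖ = ‖u * DoubleCentralizer.coe ℂ (a * (x * x))‖ := by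
        rw [hu_mul, norm_coe]
    _ = ‖T1 + T2 + T3‖ := by rw [hsplit]
    _ ≤ ‖T1 + T2‖ + ‖T3‖ := norm_add_le _ _
    _ ≤ (‖T1‖ + ‖T2‖) + ‖T3‖ := by gcongr; exact norm_add_le _ _
    _ ≤ (ε + ε) + ε := by gcongr
    _ = 3 * ε := by ring

end RokhlinAux

open RokhlinAux in
/-- An action of a finite group on a nonzero C*-algebra with the Rokhlin property
is pointwise outer: for `g ≠ 1`, the automorphism `α g` is not implemented by any
unitary of the multiplier algebra `𝓜(ℂ, A)`. -/
theorem stmt11 {G A : Type*} [Group G] [Fintype G] [NonUnitalCStarAlgebra A]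
    [Nontrivial A]
    (α : G → (A ≃⋆ₐ[ℂ] A)) (hα : ∀ g h a, α (g * h) a = α g (α h a))
    (hRokhlin : RokhlinProperty α) :
    ∀ g : G, g ≠ 1 →
      ¬ ∃ u : 𝓜(ℂ, A),
        (star u * u = 1 ∧ u * star u = 1) ∧
        ∀ a : A, DoubleCentralizer.coe ℂ (α g a)
          = u * DoubleCentralizer.coe ℂ a * star u := by
  classical
  intro g hg ⟨u, ⟨hu1, hu2⟩, himp⟩
  -- a norm-one element
  obtain ⟨b, hb⟩ := exists_ne (0 : A)
  set a : A := ‖b‖⁻¹ • b with ha_def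
  have ha : ‖a‖ = 1 := by
    rw [ha_def, norm_smul, norm_inv, norm_norm,
      inv_mul_cancel₀ (norm_ne_zero_iff.mpr hb)]
  -- the multiplier algebra is nontrivial, hence `‖1‖ = 1` and `‖u‖ = 1`
  have hMnt : Nontrivial 𝓜(ℂ, A) := by
    refine ⟨DoubleCentralizer.coe ℂ a, 0, fun h => ?_⟩
    have : ‖DoubleCentralizer.coe ℂ a‖ = 0 := by rw [h, norm_zero]
    rw [norm_coe, ha] at this
    norm_num at this
  have hone : ‖(1 : 𝓜(ℂ, A))‖ = 1 := CStarRing.norm_one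
  have hu_norm : ‖u‖ = 1 := by
    have h1 : ‖u‖ * ‖u‖ = 1 := by
      rw [← CStarRing.norm_star_mul_self, hu1, hone]
    nlinarith [norm_nonneg u]
  have hus_norm : ‖star u‖ = 1 := by rw [norm_star, hu_norm]
  have hu_mul : ∀ z : 𝓜(ℂ, A), ‖u * z‖ = ‖z‖ := by
    intro z
    refine le_antisymm ((norm_mul_le u z).trans (by rw [hu_norm, one_mul])) ?_
    calc ‖z‖ = ‖star u * (u * z)‖ := by rw [← mul_assoc, hu1, one_mul]
      _ ≤ ‖star u‖ * ‖u * z‖ := norm_mul_le _ _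
      _ = ‖u * z‖ := by rw [hus_norm, one_mul]
  -- choose ε
  set n : ℕ := Fintype.card G with hn_def
  have hn1 : (1 : ℝ) ≤ n := by
    exact_mod_cast Nat.one_le_iff_ne_zero.mpr Fintype.card_ne_zero
  have hnpos : (0 : ℝ) < n := lt_of_lt_of_le one_pos hn1
  have hn0 : (n : ℝ) ≠ 0 := hnpos.ne'
  set ε : ℝ := (48 * (n : ℝ) ^ 2 + 2 * n + 2)⁻¹ with hε_def
  have hden : (0 : ℝ) < 48 * (n : ℝ) ^ 2 + 2 * n + 2 := by positivity
  have hε : 0 < ε := by positivity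
  -- apply the Rokhlin property with F = {a, u.fst a}
  obtain ⟨r, hpos, hnorm, horth, happrox, hcomm, hsum⟩ := hRokhlin ε hε {a, u.fst a}
  have ha_mem : a ∈ ({a, u.fst a} : Finset A) := by simp
  have hc_mem : u.fst a ∈ ({a, u.fst a} : Finset A) := by simp
  -- self-adjointness of the r h
  have hsa : ∀ h : G, star (r h) = r h := by
    intro h
    obtain ⟨s, hs⟩ := hpos h
    rw [hs, star_mul, star_star]
  -- main step: for every h, ‖a * (r h * r h)‖ ≤ 3 * ε
  have hstep : ∀ h : G, ‖a * (r h * r h)‖ ≤ 3 * ε := by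
    intro h
    have hne : h ≠ g * h := by
      intro hh
      exact hg (mul_eq_right.mp hh.symm)
    have h0 : r h * r (g * h) = 0 := horth h (g * h) hne
    have h1 : ‖r h * α g (r h)‖ < ε := by
      calc ‖r h * α g (r h)‖ = ‖r h * (α g (r h) - r (g * h))‖ := by
            rw [mul_sub, h0, sub_zero]
        _ ≤ ‖r h‖ * ‖α g (r h) - r (g * h)‖ := norm_mul_le _ _
        _ ≤ 1 * ‖α g (r h) - r (g * h)‖ :=
            mul_le_mul_of_nonneg_right (hnorm h) (norm_nonneg _)
        _ = ‖α g (r h) - r (g * h)‖ := one_mul _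
        _ < ε := happrox g h
    exact step_bound u hu1 hu_norm hu_mul a (r h) (α g (r h)) (hnorm h) ha
      (himp (r h)) h1 (hcomm a ha_mem h) (hcomm (u.fst a) hc_mem h)
  -- hence ‖a * r h‖ ≤ √(3ε)
  have hsqrt : ∀ h : G, ‖a * r h‖ ≤ Real.sqrt (3 * ε) := by
    intro h
    have hsq : ‖a * r h‖ * ‖a * r h‖ ≤ 3 * ε := by
      calc ‖a * r h‖ * ‖a * r h‖ = ‖(a * r h) * star (a * r h)‖ :=
            CStarRing.norm_self_mul_star.symm
        _ = ‖(a * (r h * r h)) * star a‖ := by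
            rw [star_mul, hsa]
            noncomm_ring
        _ ≤ ‖a * (r h * r h)‖ * ‖star a‖ := norm_mul_le _ _
        _ = ‖a * (r h * r h)‖ := by rw [norm_star, ha, mul_one]
        _ ≤ 3 * ε := hstep h
    nlinarith [Real.sq_sqrt (by positivity : (0:ℝ) ≤ 3 * ε), Real.sqrt_nonneg (3 * ε),
      norm_nonneg (a * r h), sq_nonneg (‖a * r h‖ - Real.sqrt (3 * ε))]
  -- final estimate
  have hfinal : (1 : ℝ) ≤ ε + n * (ε + Real.sqrt (3 * ε)) := by
    have hsum' : ‖(∑ h, r h) * a - a‖ < ε := hsum a ha_mem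
    have hperh : ∀ h : G, ‖r h * a‖ ≤ ε + Real.sqrt (3 * ε) := by
      intro h
      calc ‖r h * a‖ = ‖(r h * a - a * r h) + a * r h‖ := by rw [sub_add_cancel]
        _ ≤ ‖r h * a - a * r h‖ + ‖a * r h‖ := norm_add_le _ _
        _ ≤ ε + Real.sqrt (3 * ε) := add_le_add (hcomm a ha_mem h).le (hsqrt h)
    calc (1 : ℝ) = ‖a‖ := ha.symm
      _ = ‖(a - (∑ h, r h) * a) + (∑ h, r h) * a‖ := by rw [sub_add_cancel]
      _ ≤ ‖a - (∑ h, r h) * a‖ + ‖(∑ h, r h) * a‖ := norm_add_le _ _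
      _ ≤ ε + ‖∑ h, r h * a‖ := by
          gcongr
          · rw [norm_sub_rev]; exact hsum'.le
          · rw [Finset.sum_mul]
      _ ≤ ε + ∑ h : G, ‖r h * a‖ := by
          gcongr
          exact norm_sum_le _ _
      _ ≤ ε + ∑ _h : G, (ε + Real.sqrt (3 * ε)) := by
          gcongr with h
          exact hperh h
      _ = ε + n * (ε + Real.sqrt (3 * ε)) := by
          rw [Finset.sum_const, Finset.card_univ, nsmul_eq_mul, hn_def]
  -- numerical contradiction
  have hsb : Real.sqrt (3 * ε) ≤ 1 / (4 * n) := by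
    have h1 : 3 * ε ≤ (1 / (4 * (n : ℝ))) ^ 2 := by
      rw [div_pow, one_pow, hε_def, ← one_div, mul_one_div,
        div_le_div_iff₀ hden (by positivity)]
      nlinarith
    calc Real.sqrt (3 * ε) ≤ Real.sqrt ((1 / (4 * (n : ℝ))) ^ 2) := Real.sqrt_le_sqrt h1
      _ = 1 / (4 * (n : ℝ)) := Real.sqrt_sq (by positivity)
  have hεb : ε ≤ 1 / (2 * (n : ℝ) + 2) := by
    rw [hε_def, ← one_div, div_le_div_iff₀ hden (by positivity)]
    nlinarith
  have hle : (1 : ℝ) ≤ 1 / (2 * (n : ℝ) + 2) + n * (1 / (2 * (n : ℝ) + 2) + 1 / (4 * n)) := by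
    calc (1 : ℝ) ≤ ε + n * (ε + Real.sqrt (3 * ε)) := hfinal
      _ ≤ 1 / (2 * (n : ℝ) + 2) + n * (1 / (2 * (n : ℝ) + 2) + 1 / (4 * n)) := by
          gcongr
  have hkey : 1 / (2 * (n : ℝ) + 2) + (n : ℝ) * (1 / (2 * (n : ℝ) + 2) + 1 / (4 * n))
      = 1 / 2 + 1 / 4 := by
    field_simp
    ring
  rw [hkey] at hle
  norm_num at hle
end

section
/- Let A be a C*-algebra, let 0 < ε < 1, let a ∈ A be a positive contraction, and let b ∈ A satisfy ‖b − a‖ < ε. Then ‖(b* b)^{1/2} − a‖ < 2 ε^{1/2}, where (b* b)^{1/2} denotes the positive square root of the positive element b* b given by the continuous functional calculus. -/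
open scoped NNReal CStarAlgebra
open CFC

section Helpers
variable {B : Type*} [CStarAlgebra B] [PartialOrder B] [StarOrderedRing B]

private lemma my_sqrt_le_sqrt_of_isUnit {x y : B} (hx : 0 ≤ x) (hxy : x ≤ y) (hyu : IsUnit y) :
    sqrt x ≤ sqrt y := by
  have hy : 0 ≤ y := hx.trans hxy
  have hy0 : 0 ∉ spectrum ℝ≥0 y := spectrum.zero_notMem ℝ≥0 hyu
  have h1 : sqrt y * y ^ (-(1/2) : ℝ) = 1 := by
    rw [sqrt_eq_rpow, ← CFC.rpow_add hyu]
    norm_num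
    exact rpow_zero y
  have h2 : y ^ (-(1/2) : ℝ) * sqrt y = 1 := by
    rw [sqrt_eq_rpow, ← CFC.rpow_add hyu]
    norm_num
    exact rpow_zero y
  have hsy : IsUnit (sqrt y) := ⟨⟨sqrt y, y ^ (-(1/2) : ℝ), h1, h2⟩, rfl⟩
  have key : ‖sqrt x * y ^ (-(1/2) : ℝ)‖ ≤ 1 :=
    (le_iff_norm_sqrt_mul_rpow x y hx (IsStrictlyPositive.iff_of_unital.mpr ⟨hy, hyu⟩)).mp hxy
  rw [le_iff_norm_sqrt_mul_rpow _ _ (sqrt_nonneg _) (IsStrictlyPositive.iff_of_unital.mpr ⟨sqrt_nonneg _, hsy⟩)]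
  have hrw : (sqrt y) ^ (-(1/2) : ℝ) = y ^ (-(1/4) : ℝ) := by
    rw [rpow_sqrt y _ hyu hy]
    norm_num
  rw [hrw]
  set c := sqrt (sqrt x) * y ^ (-(1/4) : ℝ) with hc
  have hsx : IsSelfAdjoint (sqrt (sqrt x)) := .of_nonneg (sqrt_nonneg _)
  have hyq : IsSelfAdjoint (y ^ (-(1/4) : ℝ)) := .of_nonneg rpow_nonneg
  have hcc : star c * c = y ^ (-(1/4) : ℝ) * (sqrt x * y ^ (-(1/4) : ℝ)) := by
    rw [hc, star_mul, hsx.star_eq, hyq.star_eq]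
    rw [mul_assoc, ← mul_assoc (sqrt (sqrt x)), sqrt_mul_sqrt_self (sqrt x) (sqrt_nonneg _)]
  have hp : (0 : B) ≤ star c * c := star_mul_self_nonneg c
  have hnorm : ‖star c * c‖ ≤ 1 := by
    nontriviality B
    have hmem : ‖star c * c‖ ∈ spectrum ℝ (star c * c) :=
      CStarAlgebra.norm_mem_spectrum_of_nonneg hp
    rcases eq_or_ne ‖star c * c‖ 0 with h0 | h0
    · rw [h0]; norm_num
    · have hmem' : ‖star c * c‖ ∈
          spectrum ℝ ((sqrt x * y ^ (-(1/4) : ℝ)) * y ^ (-(1/4) : ℝ)) \ {0} := by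
        rw [← spectrum.nonzero_mul_comm]
        exact ⟨hcc ▸ hmem, h0⟩
      have heq : (sqrt x * y ^ (-(1/4) : ℝ)) * y ^ (-(1/4) : ℝ)
          = sqrt x * y ^ (-(1/2) : ℝ) := by
        rw [mul_assoc, ← CFC.rpow_add hyu]
        norm_num
      rw [heq] at hmem'
      calc ‖star c * c‖ ≤ ‖(‖star c * c‖)‖ := Real.le_norm_self _
        _ ≤ ‖sqrt x * y ^ (-(1/2) : ℝ)‖ := spectrum.norm_le_norm_of_mem hmem'.1
        _ ≤ 1 := key
  calc ‖c‖ = Real.sqrt ‖star c * c‖ := by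
        rw [CStarRing.norm_star_mul_self, Real.sqrt_mul_self (norm_nonneg _)]
    _ ≤ 1 := by
        rw [show (1:ℝ) = Real.sqrt 1 by simp]
        exact Real.sqrt_le_sqrt hnorm

private lemma my_nnreal_sqrt_add_le (a b : ℝ≥0) :
    NNReal.sqrt (a + b) ≤ NNReal.sqrt a + NNReal.sqrt b := by
  rw [← NNReal.sqrt_sq (NNReal.sqrt a + NNReal.sqrt b)]
  apply NNReal.sqrt_le_sqrt.mpr
  rw [add_sq]
  simp only [NNReal.sq_sqrt]
  calc a + b ≤ a + b + 2 * NNReal.sqrt a * NNReal.sqrt b := le_self_add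
    _ = a + 2 * NNReal.sqrt a * NNReal.sqrt b + b := by ring

private lemma my_sqrt_add_algebraMap_le {y : B} (hy : 0 ≤ y) (s : ℝ≥0) :
    sqrt (y + algebraMap ℝ≥0 B s) ≤ sqrt y + algebraMap ℝ≥0 B (NNReal.sqrt s) := by
  have h1 : y + algebraMap ℝ≥0 B s = cfc (fun t : ℝ≥0 => t + s) y := by
    rw [show (fun t : ℝ≥0 => t + s) = (fun t : ℝ≥0 => id t + (fun _ : ℝ≥0 => s) t) from rfl,
      cfc_add y id (fun _ => s), cfc_id ℝ≥0 y, cfc_const s y]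
  have h2 : sqrt (y + algebraMap ℝ≥0 B s) = cfc (fun t : ℝ≥0 => NNReal.sqrt (t + s)) y := by
    rw [h1, sqrt_eq_cfc, ← cfc_comp' NNReal.sqrt (fun t : ℝ≥0 => t + s) y]
  rw [h2]
  calc cfc (fun t : ℝ≥0 => NNReal.sqrt (t + s)) y
      ≤ cfc (fun t : ℝ≥0 => NNReal.sqrt t + NNReal.sqrt s) y := by
        exact cfc_mono fun t _ => my_nnreal_sqrt_add_le t s
    _ = sqrt y + algebraMap ℝ≥0 B (NNReal.sqrt s) := by
        rw [cfc_add y NNReal.sqrt (fun _ => NNReal.sqrt s), cfc_const _ y, sqrt_eq_cfc]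

private lemma my_algebraMap_nonneg {s : ℝ} (hs : 0 ≤ s) : (0 : B) ≤ algebraMap ℝ B s := by
  have h := star_mul_self_nonneg (algebraMap ℝ B (Real.sqrt s))
  rwa [(IsSelfAdjoint.algebraMap B (star_trivial _)).star_eq, ← map_mul,
    Real.mul_self_sqrt hs] at h

private lemma my_algebraMap_nnreal_nonneg (r : ℝ≥0) : (0 : B) ≤ algebraMap ℝ≥0 B r := by
  rw [IsScalarTower.algebraMap_apply ℝ≥0 ℝ B]
  exact my_algebraMap_nonneg r.coe_nonneg

private lemma my_key (x y : B) (hx : 0 ≤ x) (hy : 0 ≤ y) (ε : ℝ≥0) (hε : 0 < ε) :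
    sqrt x - sqrt y ≤ algebraMap ℝ≥0 B (NNReal.sqrt (‖x - y‖₊ + ε)) := by
  have hsax : IsSelfAdjoint x := .of_nonneg hx
  have hsay : IsSelfAdjoint y := .of_nonneg hy
  set t : ℝ≥0 := ‖x - y‖₊ with ht
  have h1 : x ≤ y + algebraMap ℝ≥0 B (t + ε) := by
    have h2 : x - y ≤ algebraMap ℝ B ‖x - y‖ :=
      IsSelfAdjoint.le_algebraMap_norm_self (hsax.sub hsay)
    have h3 : algebraMap ℝ B ‖x - y‖ = algebraMap ℝ≥0 B t := by
      rw [IsScalarTower.algebraMap_apply ℝ≥0 ℝ B]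
      congr 1
    have h4 : algebraMap ℝ≥0 B t ≤ algebraMap ℝ≥0 B (t + ε) := by
      rw [map_add]
      exact le_add_of_nonneg_right (my_algebraMap_nnreal_nonneg ε)
    calc x ≤ algebraMap ℝ B ‖x - y‖ + y := sub_le_iff_le_add.mp h2
      _ = y + algebraMap ℝ≥0 B t := by rw [h3, add_comm]
      _ ≤ y + algebraMap ℝ≥0 B (t + ε) := add_le_add (le_refl y) h4
  have hu : IsUnit (y + algebraMap ℝ≥0 B (t + ε)) := by
    refine CStarAlgebra.isUnit_of_le _ (le_add_of_nonneg_left hy)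
      (IsStrictlyPositive.iff_of_unital.mpr ⟨my_algebraMap_nnreal_nonneg _, ?_⟩)
    exact (isUnit_iff_ne_zero.mpr (add_pos_of_nonneg_of_pos (zero_le : 0 ≤ t) hε).ne').map
      (algebraMap ℝ≥0 B)
  have h5 : sqrt x ≤ sqrt y + algebraMap ℝ≥0 B (NNReal.sqrt (t + ε)) :=
    (my_sqrt_le_sqrt_of_isUnit hx h1 hu).trans (my_sqrt_add_algebraMap_le hy _)
  exact sub_le_iff_le_add.mpr (by rwa [add_comm] at h5)

private lemma my_norm_sqrt_sub_sqrt_le {x y : B} (hx : 0 ≤ x) (hy : 0 ≤ y) :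
    ‖sqrt x - sqrt y‖ ≤ Real.sqrt ‖x - y‖ := by
  set d : B := sqrt x - sqrt y with hd
  have hsad : IsSelfAdjoint d :=
    ((IsSelfAdjoint.of_nonneg (sqrt_nonneg (a := x))).sub (.of_nonneg (sqrt_nonneg (a := y))))
  have hbound : ∀ ε : ℝ≥0, 0 < ε → ‖d‖ ≤ ((NNReal.sqrt (‖x - y‖₊ + ε) : ℝ≥0) : ℝ) := by
    intro ε hε
    set r : ℝ≥0 := NNReal.sqrt (‖x - y‖₊ + ε) with hr
    have hd1 : d ≤ algebraMap ℝ≥0 B r := my_key x y hx hy ε hε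
    have hd2 : -d ≤ algebraMap ℝ≥0 B r := by
      have h := my_key y x hy hx ε hε
      rw [show ‖y - x‖₊ = ‖x - y‖₊ by rw [← neg_sub x y, nnnorm_neg]] at h
      rw [hd, neg_sub]
      exact h
    rw [IsScalarTower.algebraMap_apply ℝ≥0 ℝ B r] at hd1 hd2
    have hs1 : ∀ μ ∈ spectrum ℝ d, μ ≤ (r : ℝ) :=
      (le_algebraMap_iff_spectrum_le hsad).mp hd1
    have hs2 : ∀ μ ∈ spectrum ℝ (-d), μ ≤ (r : ℝ) :=
      (le_algebraMap_iff_spectrum_le hsad.neg).mp hd2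
    nontriviality B
    rcases CStarAlgebra.norm_or_neg_norm_mem_spectrum hsad with h | h
    · exact hs1 _ h
    · refine hs2 ‖d‖ ?_
      rw [← spectrum.neg_eq, Set.mem_neg]
      exact h
  have hsq : ‖d‖ ^ 2 ≤ ‖x - y‖ := by
    refine le_of_forall_pos_le_add fun ε hε => ?_
    have h := hbound ε.toNNReal (Real.toNNReal_pos.mpr hε)
    rw [Real.coe_sqrt, NNReal.coe_add, coe_nnnorm, Real.coe_toNNReal _ hε.le] at h
    exact (Real.le_sqrt (norm_nonneg d) (by positivity)).mp h
  exact (Real.le_sqrt (norm_nonneg d) (norm_nonneg _)).mpr hsq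

end Helpers

/-- If `a` is a positive contraction in a C*-algebra and `‖b - a‖ < ε < 1`, then
`‖(b*b)^{1/2} - a‖ < 2 ε^{1/2}`, where `(b*b)^{1/2} = cfcₙ Real.sqrt (star b * b)`
is the positive square root of `b*b` given by the continuous functional calculus. -/
theorem stmt14 {A : Type*} [NonUnitalCStarAlgebra A] [PartialOrder A] [StarOrderedRing A]
    (ε : ℝ) (hε0 : 0 < ε) (hε1 : ε < 1) (a b : A)
    (ha : 0 ≤ a) (ha1 : ‖a‖ ≤ 1) (hba : ‖b - a‖ < ε) :
    ‖cfcₙ Real.sqrt (star b * b) - a‖ < 2 * ε ^ ((1 : ℝ) / 2) := by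
  set c : A := star b * b with hcdef
  have hc : 0 ≤ c := star_mul_self_nonneg b
  -- identify the real cfcₙ sqrt with `CFC.sqrt`
  have hA : cfcₙ Real.sqrt c = CFC.sqrt c := by
    rw [CFC.sqrt, cfcₙ_nnreal_eq_real NNReal.sqrt c hc]
    congr 1; funext x; rw [Real.sqrt]
  rw [hA]
  -- move to the unitization
  have ha' : (0 : A⁺¹) ≤ (a : A⁺¹) := Unitization.inr_nonneg_iff.mpr ha
  have hc' : (0 : A⁺¹) ≤ (c : A⁺¹) := Unitization.inr_nonneg_iff.mpr hc
  have hsqrt_inr : ((CFC.sqrt c : A) : A⁺¹) = CFC.sqrt ((c : A⁺¹)) := by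
    rw [CFC.sqrt, Unitization.nnreal_cfcₙ_eq_cfc_inr c NNReal.sqrt, sqrt_eq_cfc]
  have hnorm_eq : ‖CFC.sqrt c - a‖ = ‖CFC.sqrt ((c : A⁺¹)) - (a : A⁺¹)‖ := by
    rw [← hsqrt_inr, ← Unitization.inr_sub ℂ, Unitization.norm_inr]
  rw [hnorm_eq]
  -- the key estimate
  have haa' : (0 : A⁺¹) ≤ (a : A⁺¹) * (a : A⁺¹) := by
    have := star_mul_self_nonneg ((a : A⁺¹))
    rwa [(IsSelfAdjoint.of_nonneg ha').star_eq] at this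
  have hkey := my_norm_sqrt_sub_sqrt_le (x := (c : A⁺¹)) (y := (a : A⁺¹) * (a : A⁺¹)) hc' haa'
  rw [CFC.sqrt_mul_self ((a : A⁺¹)) ha'] at hkey
  -- bound on ‖c - a * a‖
  have hb_norm : ‖b‖ ≤ 1 + ε := by
    calc ‖b‖ = ‖b - a + a‖ := by rw [sub_add_cancel]
      _ ≤ ‖b - a‖ + ‖a‖ := norm_add_le _ _
      _ ≤ ε + 1 := add_le_add hba.le ha1
      _ = 1 + ε := by ring
  have hdiff : ‖c - a * a‖ < 4 * ε := by
    have hsplit : c - a * a = star b * (b - a) + star (b - a) * a := by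
      rw [hcdef, star_sub]
      have : a * a = star a * a := by rw [(IsSelfAdjoint.of_nonneg ha).star_eq]
      rw [this]
      noncomm_ring
    rw [hsplit]
    calc ‖star b * (b - a) + star (b - a) * a‖
        ≤ ‖star b * (b - a)‖ + ‖star (b - a) * a‖ := norm_add_le _ _
      _ ≤ ‖star b‖ * ‖b - a‖ + ‖star (b - a)‖ * ‖a‖ := add_le_add (norm_mul_le _ _) (norm_mul_le _ _)
      _ = ‖b‖ * ‖b - a‖ + ‖b - a‖ * ‖a‖ := by rw [norm_star, norm_star]
      _ < 4 * ε := by nlinarith [norm_nonneg (b - a), norm_nonneg b, norm_nonneg a]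
  have hdiff' : ‖(c : A⁺¹) - (a : A⁺¹) * (a : A⁺¹)‖ < 4 * ε := by
    rw [← Unitization.inr_mul ℂ, ← Unitization.inr_sub ℂ, Unitization.norm_inr]
    exact hdiff
  have hfinal : ‖CFC.sqrt ((c : A⁺¹)) - (a : A⁺¹)‖ < Real.sqrt (4 * ε) :=
    hkey.trans_lt <| (Real.sqrt_lt_sqrt (norm_nonneg _) hdiff')
  have h4 : Real.sqrt (4 * ε) = 2 * ε ^ ((1 : ℝ) / 2) := by
    rw [show (4 : ℝ) * ε = (2 : ℝ) ^ 2 * ε by ring, Real.sqrt_mul (by positivity),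
      Real.sqrt_sq (by norm_num), Real.sqrt_eq_rpow]
  rw [← h4]
  exact hfinal
end
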